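/- arXiv:2312.12803 — 9 statements merged into one kernel-verified Lean document; each statement's English description precedes it below -/
import Mathlib

section
/- Let F be a field, h ∈ F[x] with deg h = w ≥ 1, m₁ ≥ 1 an integer, and let R₁, …, R_{m₁} ∈ F[x] satisfy deg R_i < w for all i ∈ [m₁]. Set G(x) = Σ_{i=1}^{m₁} R_i(x)·h(x)^{i−1}. Then for every y ∈ F, the remainder of G upon division by h(x) − y equals Σ_{i=1}^{m₁} y^{i−1}·R_i(x). -/
open Polynomial

/-- If `G = ∑_{i=1}^{m₁} R_i · h^{i-1}` with `deg R_i < w = deg h`, then for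
every `y` the remainder of `G` upon division by `h - y` is `∑_{i=1}^{m₁} y^{i-1} · R_i`
(here indexed `i = 0, …, m₁-1`). -/
theorem tamo_barg_remainder_of_h_expansion
    (F : Type*) [Field F] (h : F[X]) (w m₁ : ℕ)
    (hdeg : h.natDegree = w) (hw : 1 ≤ w) (hm₁ : 1 ≤ m₁)
    (R : ℕ → F[X]) (hR : ∀ i, i < m₁ → (R i).degree < ((w : ℕ) : WithBot ℕ))
    (G : F[X]) (hG : G = ∑ i ∈ Finset.range m₁, R i * h ^ i) :
    ∀ y : F, G % (h - C y) = ∑ i ∈ Finset.range m₁, C (y ^ i) * R i := by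
  intro y
  set S : F[X] := ∑ i ∈ Finset.range m₁, C (y ^ i) * R i with hS
  have hh0 : h ≠ 0 := by
    intro h0; rw [h0, natDegree_zero] at hdeg; omega
  have hdegh : 1 ≤ h.degree := by
    rw [degree_eq_natDegree hh0, hdeg]; exact_mod_cast hw
  have hdsub : (h - C y).degree = h.degree := by
    apply degree_sub_eq_left_of_degree_lt
    exact lt_of_le_of_lt (degree_C_le) (lt_of_lt_of_le (by norm_num) hdegh)
  have hsub0 : h - C y ≠ 0 := by
    intro h0
    rw [h0, degree_zero] at hdsub
    rw [← hdsub] at hdegh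
    simp at hdegh
  have hM : Monic ((h - C y) * C (leadingCoeff (h - C y))⁻¹) :=
    monic_mul_leadingCoeff_inv hsub0
  have hdM : ((h - C y) * C (leadingCoeff (h - C y))⁻¹).degree = h.degree := by
    rw [degree_mul, degree_C (by simp [leadingCoeff_ne_zero.mpr hsub0]), add_zero, hdsub]
  have hdS : S.degree < ((w : ℕ) : WithBot ℕ) := by
    refine lt_of_le_of_lt (degree_sum_le _ _) ?_
    rw [Finset.sup_lt_iff (by exact_mod_cast WithBot.bot_lt_coe w)]
    intro i hi
    exact lt_of_le_of_lt (degree_mul_le _ _)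
      (lt_of_le_of_lt (add_le_add degree_C_le le_rfl) (by simpa using hR i (Finset.mem_range.mp hi)))
  have hdvd : (h - C y) ∣ G - S := by
    rw [hG, hS, ← Finset.sum_sub_distrib]
    apply Finset.dvd_sum
    intro i _
    have : R i * h ^ i - C (y ^ i) * R i = R i * (h ^ i - (C y) ^ i) := by
      rw [C_pow]; ring
    rw [this]
    exact Dvd.dvd.mul_left (sub_dvd_pow_sub_pow h (C y) i) _
  have hdvdM : ((h - C y) * C (leadingCoeff (h - C y))⁻¹) ∣ G - S := by
    exact (IsUnit.mul_right_dvd (isUnit_C.mpr (isUnit_iff_ne_zero.mpr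
      (inv_ne_zero (leadingCoeff_ne_zero.mpr hsub0))))).mpr hdvd
  rw [Polynomial.mod_def]
  have h2 : S %ₘ ((h - C y) * C (leadingCoeff (h - C y))⁻¹) = S := by
    rw [modByMonic_eq_self_iff hM, hdM]
    calc S.degree < ((w:ℕ) : WithBot ℕ) := hdS
      _ = h.degree := by rw [degree_eq_natDegree hh0, hdeg]
  have := sub_modByMonic G S ((h - C y) * C (leadingCoeff (h - C y))⁻¹)
  rw [h2] at this
  have h3 := (modByMonic_eq_zero_iff_dvd hM).mpr hdvdM
  rw [h3] at this
  exact sub_eq_zero.mp this.symm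
end

section
/- Let F be a field, h ∈ F[x] with deg h = w ≥ 1, let r be an integer with 0 ≤ r ≤ w, let m₁ ≥ 1 be an integer, and let G ∈ F[x] with deg G < m₁·w. Suppose y₁, …, y_{m₁} ∈ F are distinct elements such that deg(G mod (h − y_i)) < r for every i ∈ [m₁]. Then there exist polynomials H₀, H₁, …, H_{r−1} ∈ F[x], each of degree at most m₁ − 1, such that for every y ∈ F one has G mod (h(x) − y) = Σ_{j=0}^{r−1} H_j(y)·x^j; moreover, for every i ∈ [m₁] and every 0 ≤ j ≤ r − 1, H_j(y_i) equals the coefficient of x^j in G mod (h − y_i). -/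
open Polynomial

private lemma mod_eq_of_dvd_sub_aux {F : Type*} [Field F] {d a s : F[X]} (hd : d ≠ 0)
    (hdvd : d ∣ (a - s)) (hs : s.degree < d.degree) : a % d = s := by
  have h1 : d ∣ (a % d - s) := by
    have hdiv : d * (a / d) + a % d = a := EuclideanDomain.div_add_mod a d
    have heq : a % d - s = (a - s) - d * (a / d) := by
      linear_combination hdiv
    rw [heq]
    exact dvd_sub hdvd (Dvd.intro _ rfl)
  by_contra hne
  have hne0 : a % d - s ≠ 0 := sub_ne_zero.mpr hne
  have h2 := Polynomial.degree_le_of_dvd h1 hne0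
  have h3 : (a % d - s).degree < d.degree :=
    lt_of_le_of_lt (degree_sub_le _ _) (max_lt (EuclideanDomain.mod_lt _ hd) hs)
  exact absurd (lt_of_le_of_lt h2 h3) (lt_irrefl _)

private lemma hadic_expansion {F : Type*} [Field F] (h : F[X]) (w : ℕ)
    (hdeg : h.degree = (w : WithBot ℕ)) :
    ∀ n (p : F[X]), p.degree < ((n * w : ℕ) : WithBot ℕ) →
      p = ∑ k ∈ Finset.range n, ((· / h)^[k] p % h) * h ^ k := by
  have hh0 : h ≠ 0 := fun hh => by simp [hh] at hdeg
  intro n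
  induction n with
  | zero =>
    intro p hp
    simp only [Nat.zero_mul, Nat.cast_zero] at hp
    rw [Nat.WithBot.lt_zero_iff, degree_eq_bot] at hp
    simp [hp]
  | succ n ih =>
    intro p hp
    have hq : (p / h).degree < ((n * w : ℕ) : WithBot ℕ) := by
      rcases eq_or_ne (p / h) 0 with h0 | h0
      · rw [h0, degree_zero]
        exact WithBot.bot_lt_coe _
      · have hcase : h.degree ≤ p.degree := by
          by_contra hc
          exact h0 ((Polynomial.div_eq_zero_iff hh0).mpr (lt_of_not_ge hc))
        have hadd := Polynomial.degree_add_div hh0 hcase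
        rw [hdeg, degree_eq_natDegree h0] at hadd
        have hp' : ((w + (p / h).natDegree : ℕ) : WithBot ℕ) < (((n + 1) * w : ℕ) : WithBot ℕ) := by
          rw [Nat.cast_add, hadd]
          exact hp
        have hlt : w + (p / h).natDegree < (n + 1) * w := by exact_mod_cast hp'
        have h6 : (n + 1) * w = w + n * w := by ring
        rw [degree_eq_natDegree h0]
        exact_mod_cast (by omega : (p / h).natDegree < n * w)
    calc p = h * (p / h) + p % h := (EuclideanDomain.div_add_mod p h).symm
      _ = ∑ k ∈ Finset.range (n + 1), ((· / h)^[k] p % h) * h ^ k := by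
          rw [ih (p / h) hq, Finset.sum_range_succ']
          simp only [Function.iterate_succ_apply, Function.iterate_zero_apply, pow_zero,
            mul_one, pow_succ]
          rw [Finset.mul_sum]
          congr 1
          apply Finset.sum_congr rfl
          intro k _
          ring

/-- Lemma 4 of the paper, remainder form. If `deg G < m₁·w` and the
remainders of `G` modulo `h - y_i` have degree `< r ≤ w = deg h` for `m₁` distinct `y_i`,
then there are polynomials `H_0, …, H_{r-1}` of degree `≤ m₁ - 1` such that for every `y`,
`G mod (h - y) = ∑_{j<r} H_j(y)·x^j`, and `H_j(y_i)` is the coefficient of `x^j` in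
`G mod (h - y_i)`. -/
theorem tamo_barg_remainder_coefficients
    (F : Type*) [Field F] (h : F[X]) (w r m₁ : ℕ)
    (hdeg : h.natDegree = w) (hw : 1 ≤ w) (hr : r ≤ w) (hm₁ : 1 ≤ m₁)
    (G : F[X]) (hG : G.degree < ((m₁ * w : ℕ) : WithBot ℕ))
    (y : Fin m₁ → F) (hy : Function.Injective y)
    (hGmod : ∀ i : Fin m₁, (G % (h - C (y i))).degree < ((r : ℕ) : WithBot ℕ)) :
    ∃ H : ℕ → F[X],
      (∀ j, j < r → (H j).degree ≤ ((m₁ - 1 : ℕ) : WithBot ℕ)) ∧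
      (∀ z : F, G % (h - C z) = ∑ j ∈ Finset.range r, C ((H j).eval z) * X ^ j) ∧
      (∀ i : Fin m₁, ∀ j, j < r → (H j).eval (y i) = (G % (h - C (y i))).coeff j) := by
  have hh0 : h ≠ 0 := by
    intro hh
    rw [hh, natDegree_zero] at hdeg
    omega
  have hdegree : h.degree = (w : WithBot ℕ) := by
    rw [Polynomial.degree_eq_natDegree hh0, hdeg]
  -- the h-adic digits of G
  set g : ℕ → F[X] := fun k => (· / h)^[k] G % h with hg
  have hexp : G = ∑ k ∈ Finset.range m₁, g k * h ^ k :=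
    hadic_expansion h w hdegree m₁ G hG
  have hgdeg : ∀ k, (g k).degree < (w : WithBot ℕ) := by
    intro k
    rw [← hdegree]
    exact EuclideanDomain.mod_lt _ hh0
  -- degree facts about h - C z
  have hdpos : (0 : WithBot ℕ) < h.degree := by
    rw [hdegree]; exact_mod_cast Nat.lt_of_lt_of_le Nat.zero_lt_one hw
  have hddeg : ∀ z : F, (h - C z).degree = (w : WithBot ℕ) := fun z => by
    rw [degree_sub_C hdpos, hdegree]
  have hd0 : ∀ z : F, h - C z ≠ 0 := by
    intro z hz
    have := hddeg z
    rw [hz, degree_zero] at this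
    exact (WithBot.bot_ne_coe) this
  -- the key remainder formula
  have key : ∀ z : F, G % (h - C z) = ∑ k ∈ Finset.range m₁, C (z ^ k) * g k := by
    intro z
    apply mod_eq_of_dvd_sub_aux (hd0 z)
    · have hsplit : G - (∑ k ∈ Finset.range m₁, C (z ^ k) * g k)
          = ∑ k ∈ Finset.range m₁, (h ^ k - (C z) ^ k) * g k := by
        conv_lhs => rw [hexp]
        rw [← Finset.sum_sub_distrib]
        apply Finset.sum_congr rfl
        intro k _
        rw [← C_pow]
        ring
      rw [hsplit]
      exact Finset.dvd_sum fun k _ => (sub_dvd_pow_sub_pow h (C z) k).mul_right _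
    · rw [hddeg z]
      refine lt_of_le_of_lt (degree_sum_le _ _) ?_
      refine (Finset.sup_lt_iff (WithBot.bot_lt_coe w)).mpr ?_
      intro k _
      calc (C (z ^ k) * g k).degree ≤ (g k).degree := by
            refine le_trans (degree_mul_le _ _) ?_
            calc (C (z ^ k)).degree + (g k).degree ≤ 0 + (g k).degree :=
                  add_le_add degree_C_le le_rfl
              _ = (g k).degree := zero_add _
        _ < (w : WithBot ℕ) := hgdeg k
  -- the candidate polynomials
  set H : ℕ → F[X] := fun j => ∑ k ∈ Finset.range m₁, C ((g k).coeff j) * X ^ k with hH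
  have hHdeg : ∀ j, (H j).degree ≤ ((m₁ - 1 : ℕ) : WithBot ℕ) := by
    intro j
    refine le_trans (degree_sum_le _ _) ?_
    refine Finset.sup_le ?_
    intro k hk
    refine le_trans (degree_C_mul_X_pow_le k _) ?_
    exact_mod_cast Nat.le_pred_of_lt (Finset.mem_range.mp hk)
  have hcoeff : ∀ (z : F) (j : ℕ), (G % (h - C z)).coeff j = (H j).eval z := by
    intro z j
    rw [key z, hH]
    simp only [finset_sum_coeff, coeff_C_mul, eval_finset_sum, eval_mul, eval_C, eval_pow,
      eval_X]
    apply Finset.sum_congr rfl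
    intro k _
    ring
  -- H j vanishes for r ≤ j
  have hzero : ∀ j, r ≤ j → H j = 0 := by
    intro j hj
    apply Polynomial.eq_zero_of_natDegree_lt_card_of_eval_eq_zero (H j) hy
    · intro i
      rw [← hcoeff (y i) j]
      apply coeff_eq_zero_of_degree_lt
      exact lt_of_lt_of_le (hGmod i) (by exact_mod_cast hj)
    · rw [Fintype.card_fin]
      have := natDegree_le_iff_degree_le.mpr (hHdeg j)
      omega
  refine ⟨H, fun j _ => hHdeg j, ?_, fun i j _ => (hcoeff (y i) j).symm⟩
  intro z
  have hmoddeg : (G % (h - C z)).natDegree < w := by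
    by_cases hc : G % (h - C z) = 0
    · rw [hc, natDegree_zero]; omega
    · rw [natDegree_lt_iff_degree_lt hc]
      rw [← hddeg z]
      exact EuclideanDomain.mod_lt _ (hd0 z)
  have h1 : G % (h - C z) = ∑ j ∈ Finset.range w, C ((G % (h - C z)).coeff j) * X ^ j := by
    conv_lhs => rw [(G % (h - C z)).as_sum_range' w hmoddeg]
    simp [C_mul_X_pow_eq_monomial]
  rw [h1]
  rw [← Finset.sum_subset (Finset.range_subset_range.mpr hr) ?_]
  · apply Finset.sum_congr rfl
    intro j _
    rw [hcoeff z j]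
  · intro j _ hj
    rw [hcoeff z j, hzero j (by simpa using hj)]
    simp
end

section
/- Let F be a field, h ∈ F[x] with deg h = w ≥ 1, let r be an integer with 0 ≤ r ≤ w, let m₁ ≥ 1 be an integer, and let G ∈ F[x] with deg G < m₁·w. Suppose y₁, …, y_{m₁} ∈ F are distinct elements such that deg(G mod (h − y_i)) < r for every i ∈ [m₁]. Then there exist polynomials H₀, …, H_{r−1} ∈ F[x], each of degree at most m₁ − 1, such that G(x) = Σ_{j=0}^{r−1} H_j(h(x))·x^j; in particular, deg G ≤ (m₁ − 1)·w + r − 1. -/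
open Polynomial



lemma baseExpand {F : Type*} [Field F] {h : F[X]} (hm : h.Monic) {w : ℕ} (hdeg : h.natDegree = w)
    : ∀ (m : ℕ) (G : F[X]), G.degree < ((m * w : ℕ) : WithBot ℕ) →
    ∃ c : ℕ → F[X], (∀ k, (c k).degree < (w : WithBot ℕ)) ∧
      G = ∑ k ∈ Finset.range m, c k * h ^ k := by
  intro m
  induction m with
  | zero =>
    intro G hG
    simp only [Nat.zero_mul, Nat.cast_zero] at hG
    rw [Nat.WithBot.lt_zero_iff, degree_eq_bot] at hG
    refine ⟨0, fun k => ?_, by simp [hG]⟩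
    simp only [Pi.zero_apply, degree_zero]
    exact WithBot.bot_lt_coe w
  | succ m ih =>
    intro G hG
    set q := G /ₘ h with hq
    have hqdeg : q.degree < ((m * w : ℕ) : WithBot ℕ) := by
      by_cases hq0 : q = 0
      · rw [hq0, degree_zero]; exact WithBot.bot_lt_coe _
      · have hG0 : G ≠ 0 := by
          intro h0; apply hq0; rw [hq, h0, zero_divByMonic]
        have h1 : G.natDegree < (m + 1) * w := (natDegree_lt_iff_degree_lt hG0).2 hG
        have h2 : q.natDegree = G.natDegree - w := by
          rw [hq, natDegree_divByMonic G hm, hdeg]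
        have hwle : w ≤ G.natDegree := by
          by_contra hc
          exact hq0 ((divByMonic_eq_zero_iff hm).2 (by
            rw [degree_eq_natDegree hG0, degree_eq_natDegree hm.ne_zero, hdeg]
            exact_mod_cast Nat.lt_of_not_le hc))
        rw [Nat.succ_mul] at h1
        have : q.natDegree < m * w := by omega
        exact (natDegree_lt_iff_degree_lt hq0).1 this
    obtain ⟨c', hc'deg, hc'⟩ := ih q hqdeg
    refine ⟨fun k => match k with | 0 => G %ₘ h | (k+1) => c' k, fun k => ?_, ?_⟩
    · match k with
      | 0 =>
        have := degree_modByMonic_lt G hm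
        rwa [degree_eq_natDegree hm.ne_zero, hdeg] at this
      | (k+1) => exact hc'deg k
    · rw [Finset.sum_range_succ']
      simp only [pow_zero, mul_one, pow_succ]
      have hs : ∑ i ∈ Finset.range m, c' i * (h ^ i * h) = q * h := by
        simp only [← mul_assoc]
        rw [← Finset.sum_mul, ← hc']
      rw [hs, hq]
      conv_lhs => rw [← modByMonic_add_div G h]
      ring

lemma modExpand {F : Type*} [Field F] {h : F[X]} (hm : h.Monic) {w : ℕ} (hdeg : h.natDegree = w)
    (hw : 1 ≤ w) {m : ℕ} {c : ℕ → F[X]} (hc : ∀ k, (c k).degree < (w : WithBot ℕ))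
    {G : F[X]} (hG : G = ∑ k ∈ Finset.range m, c k * h ^ k) (y : F) :
    G %ₘ (h - C y) = ∑ k ∈ Finset.range m, c k * C (y ^ k) := by
  have hdegh : h.degree = (w : WithBot ℕ) := by
    rw [degree_eq_natDegree hm.ne_zero, hdeg]
  have hCy : (C y).degree < h.degree := by
    rw [hdegh]
    exact lt_of_le_of_lt degree_C_le (by exact_mod_cast hw)
  have hqm : (h - C y).Monic := by
    have := hm.add_of_left (q := -C y) (by simpa using hCy)
    simpa [sub_eq_add_neg] using this
  have hqdeg : (h - C y).degree = (w : WithBot ℕ) := by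
    rw [degree_sub_eq_left_of_degree_lt hCy, hdegh]
  set S := ∑ k ∈ Finset.range m, c k * C (y ^ k) with hS
  have hSdeg : S.degree < (h - C y).degree := by
    rw [hqdeg]
    refine lt_of_le_of_lt (degree_sum_le _ _) ?_
    refine (Finset.sup_lt_iff (WithBot.bot_lt_coe w)).2 fun k _ => ?_
    refine lt_of_le_of_lt ?_ (hc k)
    calc (c k * C (y ^ k)).degree ≤ (c k).degree + (C (y ^ k)).degree := degree_mul_le _ _
      _ ≤ (c k).degree + 0 := add_le_add_right degree_C_le _
      _ = (c k).degree := add_zero _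
  have hdvd : (h - C y) ∣ (G - S) := by
    rw [hG, hS, ← Finset.sum_sub_distrib]
    refine Finset.dvd_sum fun k _ => ?_
    rw [← mul_sub]
    refine Dvd.dvd.mul_left ?_ _
    have := sub_dvd_pow_sub_pow h (C y) k
    rwa [← C_pow] at this
  have : G %ₘ (h - C y) = S %ₘ (h - C y) + (G - S) %ₘ (h - C y) := by
    rw [← add_modByMonic]; ring_nf
  rw [this, (modByMonic_eq_zero_iff_dvd hqm).2 hdvd, add_zero,
    (modByMonic_eq_self_iff hqm).2 hSdeg]

set_option maxHeartbeats 1000000 in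
lemma monicMain {F : Type*} [Field F] {h : F[X]} (hm : h.Monic) {w r m₁ : ℕ}
    (hdeg : h.natDegree = w) (hw : 1 ≤ w) {G : F[X]}
    (hG : G.degree < ((m₁ * w : ℕ) : WithBot ℕ)) (y : Fin m₁ → F)
    (hy : Function.Injective y)
    (hmod : ∀ i : Fin m₁, (G %ₘ (h - C (y i))).degree < ((r : ℕ) : WithBot ℕ)) :
    ∃ H : ℕ → F[X],
      (∀ j, (H j).degree < ((m₁ : ℕ) : WithBot ℕ)) ∧
      G = ∑ j ∈ Finset.range r, (H j).comp h * X ^ j := by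
  obtain ⟨c, hcdeg, hcG⟩ := baseExpand hm hdeg m₁ G hG
  have key : ∀ j, r ≤ j → ∀ k, k < m₁ → (c k).coeff j = 0 := by
    intro j hj
    set P : F[X] := ∑ i : Fin m₁, C ((c i).coeff j) * X ^ (i : ℕ) with hP
    have hP0 : P = 0 := by
      by_cases hPz : P = 0
      · exact hPz
      refine eq_zero_of_natDegree_lt_card_of_eval_eq_zero P hy (fun i => ?_) ?_
      · have hGmodi := modExpand hm hdeg hw hcdeg hcG (y i)
        have h1 : P.eval (y i) = ∑ k ∈ Finset.range m₁, (c k).coeff j * (y i) ^ k := by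
          simp only [hP, eval_finset_sum, eval_mul, eval_C, eval_pow, eval_X]
          exact Fin.sum_univ_eq_sum_range (fun k => (c k).coeff j * (y i) ^ k) m₁
        have h2 : (G %ₘ (h - C (y i))).coeff j
            = ∑ k ∈ Finset.range m₁, (c k).coeff j * (y i) ^ k := by
          rw [hGmodi, finset_sum_coeff]
          exact Finset.sum_congr rfl fun k _ => coeff_mul_C _ _ _
        have h3 : (G %ₘ (h - C (y i))).coeff j = 0 :=
          coeff_eq_zero_of_degree_lt (lt_of_lt_of_le (hmod i) (by exact_mod_cast hj))
        rw [h1, ← h2, h3]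
      · rw [Fintype.card_fin]
        exact (natDegree_lt_iff_degree_lt hPz).2 (degree_sum_fin_lt _)
    intro k hk
    have hPk : P.coeff k = (c k).coeff j := by
      simp only [hP, finset_sum_coeff, coeff_C_mul, coeff_X_pow, mul_ite, mul_one, mul_zero]
      rw [Finset.sum_eq_single (⟨k, hk⟩ : Fin m₁)]
      · simp
      · intro b _ hb
        rw [if_neg]
        intro hkb
        exact hb (Fin.ext hkb.symm)
      · intro habs; exact absurd (Finset.mem_univ _) habs
    rw [← hPk, hP0, coeff_zero]
  have hck : ∀ k, k < m₁ → c k = ∑ j ∈ Finset.range r, C ((c k).coeff j) * X ^ j := by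
    intro k hk
    ext n
    rw [finset_sum_coeff]
    simp only [coeff_C_mul, coeff_X_pow, mul_ite, mul_one, mul_zero]
    rw [Finset.sum_ite_eq (Finset.range r) n (fun j => (c k).coeff j)]
    simp only [Finset.mem_range]
    split_ifs with hn
    · rfl
    · exact key n (le_of_not_gt hn) k hk
  have hcomp : ∀ j, (∑ i : Fin m₁, C ((c i).coeff j) * X ^ (i : ℕ)).comp h
      = ∑ k ∈ Finset.range m₁, C ((c k).coeff j) * h ^ k := by
    intro j
    rw [Polynomial.comp, eval₂_finset_sum]
    rw [← Fin.sum_univ_eq_sum_range (fun k => C ((c k).coeff j) * h ^ k) m₁]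
    exact Finset.sum_congr rfl fun i _ => by simp
  have hGrep : G = ∑ j ∈ Finset.range r,
      (∑ i : Fin m₁, C ((c i).coeff j) * X ^ (i : ℕ)).comp h * X ^ j :=
  calc G = ∑ k ∈ Finset.range m₁, (∑ j ∈ Finset.range r, C ((c k).coeff j) * X ^ j) * h ^ k := by
        rw [hcG]
        exact Finset.sum_congr rfl fun k hk => by rw [← hck k (Finset.mem_range.1 hk)]
    _ = ∑ k ∈ Finset.range m₁, ∑ j ∈ Finset.range r, C ((c k).coeff j) * X ^ j * h ^ k := by
        exact Finset.sum_congr rfl fun k _ => Finset.sum_mul _ _ _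
    _ = ∑ j ∈ Finset.range r, ∑ k ∈ Finset.range m₁, C ((c k).coeff j) * X ^ j * h ^ k :=
        Finset.sum_comm
    _ = ∑ j ∈ Finset.range r, (∑ k ∈ Finset.range m₁, C ((c k).coeff j) * h ^ k) * X ^ j := by
        refine Finset.sum_congr rfl fun j _ => ?_
        rw [Finset.sum_mul]
        exact Finset.sum_congr rfl fun k _ => by ring
    _ = ∑ j ∈ Finset.range r,
        (∑ i : Fin m₁, C ((c i).coeff j) * X ^ (i : ℕ) : F[X]).comp h * X ^ j := by
        exact Finset.sum_congr rfl fun j _ => by rw [hcomp j]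
  exact ⟨fun j => ∑ i : Fin m₁, C ((c i).coeff j) * X ^ (i : ℕ),
    fun j => degree_sum_fin_lt _, hGrep⟩

/-- Lemma 4 of the paper, global form. If `deg G < m₁·w` and the
remainders of `G` modulo `h - y_i` have degree `< r ≤ w = deg h` for `m₁` distinct `y_i`,
then there are polynomials `H_0, …, H_{r-1}` of degree `≤ m₁ - 1` with
`G(x) = ∑_{j<r} H_j(h(x))·x^j`; in particular `deg G ≤ (m₁-1)·w + r - 1`
(expressed as `deg G < (m₁-1)·w + r`). -/
theorem tamo_barg_global_form
    (F : Type*) [Field F] (h : F[X]) (w r m₁ : ℕ)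
    (hdeg : h.natDegree = w) (hw : 1 ≤ w) (hr : r ≤ w) (hm₁ : 1 ≤ m₁)
    (G : F[X]) (hG : G.degree < ((m₁ * w : ℕ) : WithBot ℕ))
    (y : Fin m₁ → F) (hy : Function.Injective y)
    (hGmod : ∀ i : Fin m₁, (G % (h - C (y i))).degree < ((r : ℕ) : WithBot ℕ)) :
    ∃ H : ℕ → F[X],
      (∀ j, j < r → (H j).degree ≤ ((m₁ - 1 : ℕ) : WithBot ℕ)) ∧
      G = ∑ j ∈ Finset.range r, (H j).comp h * X ^ j ∧
      G.degree < (((m₁ - 1) * w + r : ℕ) : WithBot ℕ) := by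
  have h0 : h ≠ 0 := by
    intro hz
    rw [hz, natDegree_zero] at hdeg
    omega
  set u := h.leadingCoeff with hu
  have hu0 : u ≠ 0 := leadingCoeff_ne_zero.2 h0
  set h' := h * C u⁻¹ with hh'
  have hm' : h'.Monic := monic_mul_leadingCoeff_inv h0
  have hdeg' : h'.natDegree = w := by
    rw [hh', natDegree_eq_of_degree_eq (degree_mul_leadingCoeff_inv h h0), hdeg]
  have hdegh : h.degree = (w : WithBot ℕ) := by rw [degree_eq_natDegree h0, hdeg]
  set y' : Fin m₁ → F := fun i => y i * u⁻¹ with hy'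
  have hy'inj : Function.Injective y' := by
    intro a b hab
    exact hy (mul_left_injective₀ (inv_ne_zero hu0) hab)
  have hmodconv : ∀ i : Fin m₁, G % (h - C (y i)) = G %ₘ (h' - C (y' i)) := by
    intro i
    have hCy : (C (y i)).degree < h.degree := by
      rw [hdegh]
      exact lt_of_le_of_lt degree_C_le (by exact_mod_cast hw)
    have hlc : (h - C (y i)).leadingCoeff = u := leadingCoeff_sub_of_degree_lt hCy
    rw [Polynomial.mod_def, hlc]
    congr 1
    rw [sub_mul, hh', ← C_mul, hy']
  have hmod' : ∀ i : Fin m₁, (G %ₘ (h' - C (y' i))).degree < ((r : ℕ) : WithBot ℕ) := by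
    intro i
    rw [← hmodconv i]
    exact hGmod i
  obtain ⟨H', hH'deg, hH'rep⟩ := monicMain hm' hdeg' hw hG y' hy'inj hmod'
  set H : ℕ → F[X] := fun j => (H' j).comp (C u⁻¹ * X) with hH
  have hndH' : ∀ j, (H' j).natDegree ≤ m₁ - 1 := by
    intro j
    by_cases hz : H' j = 0
    · rw [hz, natDegree_zero]; omega
    · have := (natDegree_lt_iff_degree_lt hz).2 (hH'deg j)
      omega
  have hndH : ∀ j, (H j).natDegree ≤ m₁ - 1 := by
    intro j
    refine le_trans (natDegree_comp_le) ?_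
    calc (H' j).natDegree * (C u⁻¹ * X).natDegree
        ≤ (m₁ - 1) * 1 := Nat.mul_le_mul (hndH' j)
          (le_trans (natDegree_C_mul_le _ _) natDegree_X_le)
      _ = m₁ - 1 := mul_one _
  have hHdeg : ∀ j, (H j).degree ≤ ((m₁ - 1 : ℕ) : WithBot ℕ) :=
    fun j => le_trans (degree_le_natDegree) (by exact_mod_cast hndH j)
  have hcomph : (C u⁻¹ * X).comp h = h' := by
    rw [mul_comp, C_comp, X_comp, hh', mul_comm]
  have hrep : G = ∑ j ∈ Finset.range r, (H j).comp h * X ^ j := by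
    rw [hH'rep]
    refine Finset.sum_congr rfl fun j _ => ?_
    rw [hH]
    rw [comp_assoc, hcomph]
  refine ⟨H, fun j _ => hHdeg j, hrep, ?_⟩
  rw [hrep]
  refine lt_of_le_of_lt (degree_sum_le _ _) ?_
  refine (Finset.sup_lt_iff (WithBot.bot_lt_coe _)).2 fun j hj => ?_
  have hjr : j < r := Finset.mem_range.1 hj
  have hcompdeg : ((H j).comp h).degree ≤ (((m₁ - 1) * w : ℕ) : WithBot ℕ) := by
    refine le_trans (degree_le_natDegree) ?_
    have : ((H j).comp h).natDegree ≤ (m₁ - 1) * w := by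
      refine le_trans natDegree_comp_le ?_
      rw [hdeg]
      exact Nat.mul_le_mul_right w (hndH j)
    exact_mod_cast this
  calc ((H j).comp h * X ^ j).degree
      ≤ ((H j).comp h).degree + (X ^ j : F[X]).degree := degree_mul_le _ _
    _ ≤ (((m₁ - 1) * w : ℕ) : WithBot ℕ) + (j : ℕ) := by
        rw [degree_X_pow]
        exact add_le_add_left hcompdeg _
    _ = (((m₁ - 1) * w + j : ℕ) : WithBot ℕ) := by push_cast; rfl
    _ < (((m₁ - 1) * w + r : ℕ) : WithBot ℕ) := by
        exact_mod_cast Nat.add_lt_add_left hjr _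
end

section
/- Assume the Tamo–Barg setup. Let G, G′ ∈ F[x] both have degree < m₁·w and satisfy deg(G mod (h − y_i)) < r and deg(G′ mod (h − y_i)) < r for all i ∈ [m₁]. Then for every i ∈ [m] and every r-element subset S ⊆ roots(y_i): if G(β) = G′(β) for all β ∈ S, then G(β) = G′(β) for all β ∈ roots(y_i). (That is, every code symbol of the Tamo–Barg code is determined by any r of the other symbols in its repair set roots(y_i), so all symbols have (r, w − r + 1)-locality.) -/
open Polynomial


/-- degree of a finite sum of polynomials each of degree `< n` is `< n`. -/
lemma tb_degree_sum_lt {F : Type*} [Semiring F] (s : Finset ℕ) (f : ℕ → F[X]) (n : ℕ)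
    (hn : 0 < n) (hf : ∀ k ∈ s, (f k).degree < (n : WithBot ℕ)) :
    (∑ k ∈ s, f k).degree < (n : WithBot ℕ) := by
  refine lt_of_le_of_lt (degree_sum_le s f) ?_
  rw [Finset.sup_lt_iff (by exact WithBot.bot_lt_coe n)]
  exact hf

/-- `ĥ`-adic expansion. -/
lemma tb_expansion {F : Type*} [Field F] (p : F[X]) (hp : p.Monic) (hw : 0 < p.natDegree) :
    ∀ (N : ℕ) (D : F[X]), D.degree < ((p.natDegree * N : ℕ) : WithBot ℕ) →
      ∃ a : ℕ → F[X], (∀ k, (a k).degree < (p.natDegree : WithBot ℕ)) ∧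
        D = ∑ k ∈ Finset.range N, a k * p ^ k := by
  intro N
  induction N with
  | zero =>
    intro D hD
    refine ⟨fun _ => 0, fun k => by rw [degree_zero]; exact WithBot.bot_lt_coe _, ?_⟩
    simp only [Nat.mul_zero, Nat.cast_zero] at hD
    have : D = 0 := by
      rcases Nat.WithBot.lt_zero_iff.mp hD with h
      exact degree_eq_bot.mp h
    simp [this]
  | succ N ih =>
    intro D hD
    have hdivdeg : (D /ₘ p).degree < ((p.natDegree * N : ℕ) : WithBot ℕ) := by
      by_cases hq : D /ₘ p = 0
      · rw [hq, degree_zero]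
        exact WithBot.bot_lt_coe _
      have hD0 : D ≠ 0 := by
        intro h0; apply hq; rw [h0, zero_divByMonic]
      have hnd : D.natDegree < p.natDegree * (N + 1) := by
        rwa [← natDegree_lt_iff_degree_lt hD0] at hD
      have : (D /ₘ p).natDegree = D.natDegree - p.natDegree := natDegree_divByMonic D hp
      have hnd2 : D.natDegree < p.natDegree * N + p.natDegree := by
        calc D.natDegree < p.natDegree * (N + 1) := hnd
          _ = p.natDegree * N + p.natDegree := by ring
      rw [← natDegree_lt_iff_degree_lt hq, this]
      have hge : p.natDegree ≤ D.natDegree := by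
        have h2 := mt (divByMonic_eq_zero_iff hp).mpr hq
        exact natDegree_le_natDegree (not_lt.mp h2)
      show D.natDegree - p.natDegree < p.natDegree * N
      generalize p.natDegree * N = M at hnd2 ⊢
      omega
    obtain ⟨a, ha, hsum⟩ := ih (D /ₘ p) hdivdeg
    refine ⟨fun k => if k = 0 then D %ₘ p else a (k - 1), ?_, ?_⟩
    · intro k
      by_cases hk : k = 0
      · simpa [hk] using (degree_modByMonic_lt D hp).trans_le (degree_le_natDegree)
      · simpa [hk] using ha (k - 1)
    · rw [Finset.sum_range_succ']
      have hstep : ∀ i ∈ Finset.range N,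
          (if i + 1 = 0 then D %ₘ p else a (i + 1 - 1)) * p ^ (i + 1)
            = (a i * p ^ i) * p := by
        intro i _
        simp [pow_succ, mul_assoc]
      have h1 : (if (0:ℕ) = 0 then D %ₘ p else a (0 - 1)) * p ^ 0 = D %ₘ p := by simp
      rw [Finset.sum_congr rfl hstep, h1, ← Finset.sum_mul, ← hsum]
      linear_combination -modByMonic_add_div D p

/-- In the Tamo–Barg setup, every code symbol is determined by any `r`
of the other symbols in its repair set `roots(y_i)`: if two admissible polynomials
`G, G'` agree on some `r`-element subset of `roots(y_i)`, they agree on all of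
`roots(y_i)`. -/
theorem tamo_barg_locality
    (F : Type*) [Field F] [Fintype F] [DecidableEq F]
    (h : F[X]) (w r m₁ m₂ m : ℕ)
    (hm : m = m₁ + m₂) (hm₁ : 1 ≤ m₁) (hm₂ : 0 ≤ m₂)
    (hdeg : h.natDegree = w) (hw : 1 ≤ w) (hr0 : 0 < r) (hrw : r < w)
    (y : Fin m → F) (hy : Function.Injective y)
    (hroots : ∀ i : Fin m, ((h - C (y i)).roots.toFinset).card = w)
    (G G' : F[X])
    (hG : G.degree < ((m₁ * w : ℕ) : WithBot ℕ))
    (hG' : G'.degree < ((m₁ * w : ℕ) : WithBot ℕ))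
    (hGmod : ∀ i : Fin m, (i : ℕ) < m₁ → (G % (h - C (y i))).degree < ((r : ℕ) : WithBot ℕ))
    (hG'mod : ∀ i : Fin m, (i : ℕ) < m₁ → (G' % (h - C (y i))).degree < ((r : ℕ) : WithBot ℕ)) :
    ∀ i : Fin m, ∀ S ⊆ (h - C (y i)).roots.toFinset, S.card = r →
      (∀ β ∈ S, G.eval β = G'.eval β) →
      ∀ β ∈ (h - C (y i)).roots.toFinset, G.eval β = G'.eval β := by
  classical
  -- basic setup
  have hh0 : h ≠ 0 := by
    intro h0
    rw [h0, natDegree_zero] at hdeg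
    omega
  set c : F := h.leadingCoeff with hc_def
  have hc : c ≠ 0 := leadingCoeff_ne_zero.mpr hh0
  have hdegh : h.degree = (w : WithBot ℕ) := by
    rw [degree_eq_natDegree hh0, hdeg]
  -- the shifted polynomials and their normalizations
  have hsub_ne : ∀ i : Fin m, h - C (y i) ≠ 0 := by
    intro i h0
    have : h = C (y i) := by rwa [sub_eq_zero] at h0
    rw [this, natDegree_C] at hdeg
    omega
  have hlc : ∀ i : Fin m, (h - C (y i)).leadingCoeff = c := by
    intro i
    exact leadingCoeff_sub_of_degree_lt (by
      refine lt_of_le_of_lt (degree_C_le) ?_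
      rw [hdegh]
      exact_mod_cast Nat.zero_lt_of_lt hw)
  have hdegsub : ∀ i : Fin m, (h - C (y i)).degree = (w : WithBot ℕ) := by
    intro i
    rw [degree_sub_eq_left_of_degree_lt, hdegh]
    refine lt_of_le_of_lt (degree_C_le) ?_
    rw [hdegh]
    exact_mod_cast Nat.zero_lt_of_lt hw
  set hh : F[X] := h * C c⁻¹ with hh_def
  have hhmonic : hh.Monic := monic_mul_leadingCoeff_inv hh0
  have hhdeg : hh.natDegree = w := by
    rw [hh_def, natDegree_mul_leadingCoeff_inv h hh0, hdeg]
  set z : Fin m → F := fun i => y i * c⁻¹ with hz_def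
  have hzinj : Function.Injective z := by
    intro i j hij
    exact hy (mul_right_cancel₀ (inv_ne_zero hc) hij)
  set H : Fin m → F[X] := fun i => (h - C (y i)) * C c⁻¹ with hH_def
  have hHeq : ∀ i, H i = hh - C (z i) := by
    intro i
    simp only [hH_def, hh_def, hz_def, sub_mul, C_mul]
  have hHmonic : ∀ i, (H i).Monic := by
    intro i
    have := monic_mul_leadingCoeff_inv (hsub_ne i)
    rwa [hlc i] at this
  have hHdeg : ∀ i, (H i).degree = (w : WithBot ℕ) := by
    intro i
    rw [hH_def]
    simp only
    rw [← hlc i, degree_mul_leadingCoeff_inv _ (hsub_ne i), hdegsub i]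
  -- `%` is `%ₘ` by `H i`
  have hmodeq : ∀ (p : F[X]) (i : Fin m), p % (h - C (y i)) = p %ₘ H i := by
    intro p i
    rw [Polynomial.mod_def, hlc i]
  -- the difference polynomial
  set D : F[X] := G - G' with hD_def
  have hDdeg : D.degree < ((w * m₁ : ℕ) : WithBot ℕ) := by
    have : ((w * m₁ : ℕ) : WithBot ℕ) = ((m₁ * w : ℕ) : WithBot ℕ) := by
      rw [Nat.mul_comm]
    rw [this]
    exact lt_of_le_of_lt (degree_sub_le G G') (max_lt hG hG')
  have hDmod : ∀ i : Fin m, (i : ℕ) < m₁ → (D %ₘ H i).degree < ((r : ℕ) : WithBot ℕ) := by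
    intro i hi
    rw [hD_def, sub_modByMonic]
    refine lt_of_le_of_lt (degree_sub_le _ _) (max_lt ?_ ?_)
    · rw [← hmodeq G i]; exact hGmod i hi
    · rw [← hmodeq G' i]; exact hG'mod i hi
  -- expansion of D in base hh
  obtain ⟨a, ha, hsum⟩ := tb_expansion hh hhmonic (by omega) m₁ D (by rwa [hhdeg])
  -- residue formula
  have hres : ∀ i : Fin m, D %ₘ H i = ∑ k ∈ Finset.range m₁, a k * C (z i ^ k) := by
    intro i
    set R : F[X] := ∑ k ∈ Finset.range m₁, a k * C (z i ^ k) with hR_def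
    have hdvd : H i ∣ D - R := by
      have : D - R = ∑ k ∈ Finset.range m₁, a k * (hh ^ k - C (z i) ^ k) := by
        rw [hsum, hR_def, ← Finset.sum_sub_distrib]
        refine Finset.sum_congr rfl fun k _ => ?_
        rw [mul_sub, C_pow]
      rw [this]
      refine Finset.dvd_sum fun k _ => ?_
      exact Dvd.dvd.mul_left (by rw [hHeq i]; exact sub_dvd_pow_sub_pow hh (C (z i)) k) _
    have hRdeg : R.degree < (w : WithBot ℕ) := by
      refine tb_degree_sum_lt _ _ w (by omega) fun k _ => ?_
      refine lt_of_le_of_lt (degree_mul_le _ _) ?_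
      have h1 : (a k).degree + (C (z i ^ k)).degree ≤ (a k).degree + 0 :=
        add_le_add le_rfl degree_C_le
      refine lt_of_le_of_lt h1 ?_
      rw [add_zero, ← hhdeg]
      exact ha k
    have h0 : (D - R) %ₘ H i = 0 := (modByMonic_eq_zero_iff_dvd (hHmonic i)).mpr hdvd
    have : D %ₘ H i = (D - R) %ₘ H i + R %ₘ H i := by
      rw [← add_modByMonic, sub_add_cancel]
    rw [this, h0, zero_add, (modByMonic_eq_self_iff (hHmonic i)).mpr (by rwa [hHdeg i])]
  -- the coefficients a k (k < m₁) have degree < r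
  have hadeg : ∀ k < m₁, (a k).degree < ((r : ℕ) : WithBot ℕ) := by
    intro k hk
    rw [degree_lt_iff_coeff_zero]
    intro t ht
    -- the interpolation polynomial in the k-variable
    set P : F[X] := ∑ j ∈ Finset.range m₁, C ((a j).coeff t) * X ^ j with hP_def
    have hPeval : ∀ i : Fin m, (i : ℕ) < m₁ → P.eval (z i) = 0 := by
      intro i hi
      have h1 : P.eval (z i) = (D %ₘ H i).coeff t := by
        rw [hres i, hP_def, eval_finset_sum, finset_sum_coeff]
        refine Finset.sum_congr rfl fun j _ => ?_
        rw [eval_mul, eval_C, eval_pow, eval_X, coeff_mul_C]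
      rw [h1]
      exact coeff_eq_zero_of_degree_lt (lt_of_lt_of_le (hDmod i hi) (by exact_mod_cast ht))
    -- the set of evaluation points
    have hm₁m : m₁ ≤ m := by omega
    set T : Finset F := Finset.image (fun j : Fin m₁ => z (Fin.castLE hm₁m j)) Finset.univ
      with hT_def
    have hTcard : T.card = m₁ := by
      rw [hT_def, Finset.card_image_of_injective _
        (fun j₁ j₂ hj => Fin.castLE_injective hm₁m (hzinj hj))]
      simp
    have hP0 : P = 0 := by
      refine eq_zero_of_natDegree_lt_card_of_eval_eq_zero' P T ?_ ?_
      · intro e he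
        rw [hT_def] at he
        obtain ⟨j, _, rfl⟩ := Finset.mem_image.mp he
        exact hPeval (Fin.castLE hm₁m j) (by simpa using j.isLt)
      · rw [hTcard]
        by_cases hPz : P = 0
        · rw [hPz, natDegree_zero]; omega
        rw [natDegree_lt_iff_degree_lt hPz]
        refine tb_degree_sum_lt _ _ m₁ (by omega) fun j hj => ?_
        refine lt_of_le_of_lt (degree_mul_le _ _) ?_
        refine lt_of_le_of_lt (add_le_add degree_C_le (degree_X_pow_le j)) ?_
        rw [zero_add]
        exact_mod_cast Finset.mem_range.mp hj
    have : P.coeff k = (a k).coeff t := by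
      rw [hP_def, finset_sum_coeff]
      rw [Finset.sum_eq_single k]
      · rw [coeff_C_mul, coeff_X_pow, if_pos rfl, mul_one]
      · intro j _ hjk
        rw [coeff_C_mul, coeff_X_pow, if_neg (Ne.symm hjk), mul_zero]
      · intro hk'
        exact absurd (Finset.mem_range.mpr hk) hk'
    rw [← this, hP0, coeff_zero]
  -- therefore all residues have degree < r
  have hDmodall : ∀ i : Fin m, (D %ₘ H i).degree < ((r : ℕ) : WithBot ℕ) := by
    intro i
    rw [hres i]
    refine tb_degree_sum_lt _ _ r hr0 fun k hk => ?_
    refine lt_of_le_of_lt (degree_mul_le _ _) ?_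
    refine lt_of_le_of_lt (add_le_add le_rfl degree_C_le) ?_
    rw [add_zero]
    exact hadeg k (Finset.mem_range.mp hk)
  -- now the main argument
  intro i S hS hScard hagree β hβ
  -- evaluation facts
  have hevalH : ∀ γ ∈ (h - C (y i)).roots.toFinset, (H i).eval γ = 0 := by
    intro γ hγ
    have : (h - C (y i)).eval γ = 0 := by
      have := Multiset.mem_toFinset.mp hγ
      exact (mem_roots (hsub_ne i)).mp this
    rw [hH_def]
    simp [this]
  have hevalD : ∀ γ ∈ (h - C (y i)).roots.toFinset, D.eval γ = (D %ₘ H i).eval γ := by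
    intro γ hγ
    conv_lhs => rw [← modByMonic_add_div D (H i)]
    rw [eval_add, eval_mul, hevalH γ hγ, zero_mul, add_zero]
  -- the residue vanishes on S, hence is zero
  have hres0 : D %ₘ H i = 0 := by
    refine eq_zero_of_natDegree_lt_card_of_eval_eq_zero' _ S ?_ ?_
    · intro γ hγ
      rw [← hevalD γ (hS hγ), hD_def, eval_sub, sub_eq_zero]
      exact hagree γ hγ
    · rw [hScard]
      by_cases h0 : D %ₘ H i = 0
      · rw [h0, natDegree_zero]; omega
      rw [natDegree_lt_iff_degree_lt h0]
      exact hDmodall i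
  have : D.eval β = 0 := by
    rw [hevalD β hβ, hres0, eval_zero]
  rw [hD_def] at this
  rw [eval_sub, sub_eq_zero] at this
  exact this
end

section
/- Assume the Tamo–Barg setup. Then the Tamo–Barg code has exactly q^{m₁·r} codewords, and any two distinct codewords differ in at least (m₂ + 1)·w − r + 1 of the n = m·w coordinates; i.e., it is a q-ary code of length n = m·w, size q^{m₁·r}, and minimum Hamming distance at least (m₂ + 1)·w − r + 1. -/
open Polynomial


lemma my_mod_eq_of_dvd_sub {F : Type*} [Field F] {p a s : F[X]} (hp : p ≠ 0)
    (hdvd : p ∣ a - s) (hs : s.degree < p.degree) : a % p = s := by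
  have h1 : a - a % p = p * (a / p) := by
    rw [sub_eq_iff_eq_add']; exact (EuclideanDomain.mod_add_div a p).symm
  have h2 : p ∣ a % p - s := by
    have : a % p - s = (a - s) - (a - a % p) := by ring
    rw [this]; exact dvd_sub hdvd ⟨a / p, h1⟩
  have h3 : (a % p - s).degree < p.degree :=
    lt_of_le_of_lt (degree_sub_le _ _) (max_lt (EuclideanDomain.mod_lt a hp) hs)
  have := Polynomial.eq_zero_of_dvd_of_degree_lt h2 h3
  exact sub_eq_zero.mp this

lemma my_indep {F : Type*} [Field F] {h : F[X]} (hh : 0 < h.degree) :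
    ∀ (k : ℕ) (g : ℕ → F[X]), (∀ b, (g b).degree < h.degree) →
      ∑ b ∈ Finset.range k, g b * h ^ b = 0 → ∀ b < k, g b = 0 := by
  intro k
  induction k with
  | zero => intro g _ _ b hb; omega
  | succ n ih =>
    intro g hg hsum b hb
    have hne : h ≠ 0 := fun h0 => by simp [h0] at hh
    rw [Finset.sum_range_succ'] at hsum
    -- hsum : (∑ i ∈ range n, g (i+1) * h ^ (i+1)) + g 0 * h ^ 0 = 0
    have key : h * (∑ i ∈ Finset.range n, g (i + 1) * h ^ i) + g 0 = 0 := by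
      have e : ∀ i ∈ Finset.range n, g (i + 1) * h ^ (i + 1) = h * (g (i + 1) * h ^ i) :=
        fun i _ => by ring
      rw [Finset.sum_congr rfl e, ← Finset.mul_sum, pow_zero, mul_one] at hsum
      exact hsum
    have hg0 : g 0 = 0 := by
      refine Polynomial.eq_zero_of_dvd_of_degree_lt
        ⟨-(∑ i ∈ Finset.range n, g (i + 1) * h ^ i), ?_⟩ (hg 0)
      linear_combination key
    have hQ : (∑ i ∈ Finset.range n, g (i + 1) * h ^ i) = 0 := by
      have := key
      rw [hg0, add_zero] at this
      exact (mul_eq_zero.mp this).resolve_left hne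
    have := ih (fun i => g (i + 1)) (fun i => hg _) hQ
    rcases b with _ | b
    · exact hg0
    · exact this b (by omega)

lemma my_deg_bound {F : Type*} [Field F] {h : F[X]} {w r k : ℕ}
    (hw : h.degree = (w : WithBot ℕ)) (hk : 1 ≤ k) (hr : 0 < r)
    (g : ℕ → F[X]) (hg : ∀ b, (g b).degree < (r : WithBot ℕ)) :
    (∑ b ∈ Finset.range k, g b * h ^ b).degree < (((k - 1) * w + r : ℕ) : WithBot ℕ) := by
  refine lt_of_le_of_lt (degree_sum_le _ _) ?_
  rw [Finset.sup_lt_iff (by exact WithBot.bot_lt_coe _)]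
  intro b hb
  show (g b * h ^ b).degree < _
  refine lt_of_le_of_lt (degree_mul_le _ _) ?_
  have hpow : (h ^ b).degree = ((b * w : ℕ) : WithBot ℕ) := by
    rw [degree_pow, hw, nsmul_eq_mul, Nat.cast_mul]
  rw [hpow]
  have h1 : (g b).degree + ((b * w : ℕ) : WithBot ℕ) <
      ((r : ℕ) : WithBot ℕ) + ((b * w : ℕ) : WithBot ℕ) :=
    WithBot.add_lt_add_right (by exact WithBot.coe_ne_bot) (hg b)
  refine lt_of_lt_of_le h1 ?_
  rw [← Nat.cast_add, Nat.cast_le]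
  rw [Finset.mem_range] at hb
  have : b ≤ k - 1 := by omega
  have := Nat.mul_le_mul_right w this
  omega


lemma my_deg_sum_lt {F : Type*} [Field F] {r k : ℕ} (hr : 0 < r) (c : F)
    (g : ℕ → F[X]) (hg : ∀ b, (g b).degree < (r : WithBot ℕ)) :
    (∑ b ∈ Finset.range k, C (c ^ b) * g b).degree < (r : WithBot ℕ) := by
  refine lt_of_le_of_lt (degree_sum_le _ _) ?_
  rw [Finset.sup_lt_iff (by exact WithBot.bot_lt_coe _)]
  intro b _
  refine lt_of_le_of_lt (degree_mul_le _ _) ?_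
  calc (C (c ^ b)).degree + (g b).degree ≤ 0 + (g b).degree :=
        add_le_add_left degree_C_le _
    _ = (g b).degree := zero_add _
    _ < (r : WithBot ℕ) := hg b

lemma my_mod_sum {F : Type*} [Field F] {h : F[X]} {w r k : ℕ}
    (hw : h.degree = (w : WithBot ℕ)) (hr : 0 < r) (hrw : r < w) (c : F)
    (g : ℕ → F[X]) (hg : ∀ b, (g b).degree < (r : WithBot ℕ)) :
    (∑ b ∈ Finset.range k, g b * h ^ b) % (h - C c)
      = ∑ b ∈ Finset.range k, C (c ^ b) * g b := by
  have hw0 : (0 : WithBot ℕ) < (w : WithBot ℕ) := by exact_mod_cast Nat.lt_of_lt_of_le hr hrw.le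
  have hdc : (h - C c).degree = (w : WithBot ℕ) := by
    rw [degree_sub_C (by rw [hw]; exact hw0), hw]
  have hp : h - C c ≠ 0 := fun h0 => by simp [h0] at hdc
  refine my_mod_eq_of_dvd_sub hp ?_ ?_
  · rw [← Finset.sum_sub_distrib]
    refine Finset.dvd_sum fun b _ => ?_
    have hd : h - C c ∣ h ^ b - (C c) ^ b := sub_dvd_pow_sub_pow h (C c) b
    have : g b * h ^ b - C (c ^ b) * g b = (h ^ b - (C c) ^ b) * g b := by
      rw [C_pow]; ring
    rw [this]
    exact hd.mul_right _
  · rw [hdc]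
    exact lt_of_lt_of_le (my_deg_sum_lt hr c g hg) (by exact_mod_cast hrw.le)


/-- parameters of the Tamo–Barg code. The Tamo–Barg code is a `q`-ary
code of length `n = m·w`, size `q^{m₁·r}`, and minimum Hamming distance at least
`(m₂+1)·w - r + 1`. -/
theorem tamo_barg_code_parameters
    (F : Type*) [Field F] [Fintype F] [DecidableEq F]
    (h : F[X]) (w r m₁ m₂ m : ℕ)
    (hm : m = m₁ + m₂) (hm₁ : 1 ≤ m₁) (hm₂ : 0 ≤ m₂)
    (hdeg : h.natDegree = w) (hw : 1 ≤ w) (hr0 : 0 < r) (hrw : r < w)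
    (y : Fin m → F) (hy : Function.Injective y)
    (hroots : ∀ i : Fin m, ((h - C (y i)).roots.toFinset).card = w) :
    let Γ : Finset F := Finset.univ.biUnion fun i : Fin m => (h - C (y i)).roots.toFinset
    let Code : Set (↥Γ → F) :=
      {c | ∃ G : F[X], G.degree < ((m₁ * w : ℕ) : WithBot ℕ) ∧
        (∀ i : Fin m, (i : ℕ) < m₁ →
          (G % (h - C (y i))).degree < ((r : ℕ) : WithBot ℕ)) ∧
        c = fun β => G.eval β.1}
    Γ.card = m * w ∧
    Nat.card Code = Fintype.card F ^ (m₁ * r) ∧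
    ∀ c₁ ∈ Code, ∀ c₂ ∈ Code, c₁ ≠ c₂ →
      (m₂ + 1) * w - r + 1 ≤ hammingDist c₁ c₂ := by
  intro Γ Code
  classical
  have hm' : m₁ ≤ m := by omega
  have hh0 : h ≠ 0 := fun h0 => by rw [h0, natDegree_zero] at hdeg; omega
  have hdegh : h.degree = (w : WithBot ℕ) := by rw [degree_eq_natDegree hh0, hdeg]
  have hw0 : (0 : WithBot ℕ) < (w : WithBot ℕ) := by exact_mod_cast hw
  have hdegi : ∀ i : Fin m, (h - C (y i)).degree = (w : WithBot ℕ) := fun i => by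
    rw [degree_sub_C (by rw [hdegh]; exact hw0), hdegh]
  have hnei : ∀ i : Fin m, h - C (y i) ≠ 0 := by
    intro i h0
    have := hdegi i
    rw [h0, degree_zero] at this
    exact absurd this.symm (by simp)
  have hmemi : ∀ (i : Fin m) (β : F),
      β ∈ (h - C (y i)).roots.toFinset ↔ h.eval β = y i := by
    intro i β
    rw [Multiset.mem_toFinset, mem_roots (hnei i), IsRoot.def, eval_sub, eval_C, sub_eq_zero]
  have hdisj : ∀ i j : Fin m, i ≠ j →
      Disjoint ((h - C (y i)).roots.toFinset) ((h - C (y j)).roots.toFinset) := by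
    intro i j hij
    rw [Finset.disjoint_left]
    intro β hβi hβj
    exact hij (hy (((hmemi i β).1 hβi).symm.trans ((hmemi j β).1 hβj)))
  have hΓcard : Γ.card = m * w := by
    show (Finset.univ.biUnion fun i : Fin m => (h - C (y i)).roots.toFinset).card = m * w
    rw [Finset.card_biUnion (fun i _ j _ hij => hdisj i j hij)]
    simp only [hroots, Finset.sum_const, Finset.card_univ, Fintype.card_fin, smul_eq_mul]
  -- the set of admissible polynomials
  set U : Set F[X] := {G | G.degree < ((m₁ * w : ℕ) : WithBot ℕ) ∧
      ∀ i : Fin m, (i : ℕ) < m₁ → (G % (h - C (y i))).degree < ((r : ℕ) : WithBot ℕ)} with hU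
  set V : Set F[X] := {G | ∃ g : ℕ → F[X], (∀ b, (g b).degree < ((r : ℕ) : WithBot ℕ)) ∧
      G = ∑ b ∈ Finset.range m₁, g b * h ^ b} with hV
  -- zero test on the first m₁ root sets
  have hzero : ∀ D : F[X], D.degree < ((m₁ * w : ℕ) : WithBot ℕ) →
      (∀ i : Fin m, (i : ℕ) < m₁ → (h - C (y i)) ∣ D) → D = 0 := by
    intro D hdegD hdvd
    by_cases hD : D = 0
    · exact hD
    set Γ₁ : Finset F := Finset.univ.biUnion
      (fun j : Fin m₁ => (h - C (y (Fin.castLE hm' j))).roots.toFinset) with hΓ₁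
    have hΓ₁card : Γ₁.card = m₁ * w := by
      rw [hΓ₁, Finset.card_biUnion (fun i _ j _ hij =>
        hdisj _ _ (fun e => hij (Fin.castLE_injective hm' e)))]
      simp only [hroots, Finset.sum_const, Finset.card_univ, Fintype.card_fin, smul_eq_mul]
    refine eq_zero_of_natDegree_lt_card_of_eval_eq_zero' D Γ₁ ?_ ?_
    · intro β hβ
      obtain ⟨j, -, hj⟩ := Finset.mem_biUnion.mp hβ
      obtain ⟨q, hq⟩ := hdvd (Fin.castLE hm' j) (by simpa using j.isLt)
      have hroot : (h - C (y (Fin.castLE hm' j))).eval β = 0 := by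
        rw [eval_sub, eval_C, sub_eq_zero]
        exact (hmemi _ β).1 hj
      rw [hq, eval_mul, hroot, zero_mul]
    · rw [hΓ₁card]
      exact (natDegree_lt_iff_degree_lt hD).2 hdegD
  -- zero test on Γ
  have hzeroΓ : ∀ D : F[X], D.degree < ((m₁ * w : ℕ) : WithBot ℕ) →
      (∀ β ∈ Γ, D.eval β = 0) → D = 0 := by
    intro D hdegD heval
    by_cases hD : D = 0
    · exact hD
    refine eq_zero_of_natDegree_lt_card_of_eval_eq_zero' D Γ heval ?_
    rw [hΓcard]
    have h1 : D.natDegree < m₁ * w := (natDegree_lt_iff_degree_lt hD).2 hdegD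
    have h2 : m₁ * w ≤ m * w := Nat.mul_le_mul_right w hm'
    omega
  -- V ⊆ U
  have hVU : V ⊆ U := by
    rintro G ⟨g, hg, rfl⟩
    constructor
    · refine lt_of_lt_of_le (my_deg_bound hdegh hm₁ hr0 g hg) ?_
      rw [Nat.cast_le]
      have e : (m₁ - 1) * w + w = m₁ * w := by
        have e1 : m₁ - 1 + 1 = m₁ := by omega
        calc (m₁ - 1) * w + w = ((m₁ - 1) + 1) * w := by ring
          _ = m₁ * w := by rw [e1]
      omega
    · intro i hi
      rw [my_mod_sum hdegh hr0 hrw (y i) g hg]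
      exact my_deg_sum_lt hr0 (y i) g hg
  -- U ⊆ V via cardinality, and the cardinality of U
  have hcardV : Nat.card ↥V = Fintype.card F ^ (m₁ * r) := by
    have hfin : Finite ↥(degreeLT F r) := Finite.of_equiv _ (degreeLTEquiv F r).toEquiv.symm
    set ext : (Fin m₁ → ↥(degreeLT F r)) → ℕ → F[X] := fun g b =>
      if hb : b < m₁ then (g ⟨b, hb⟩ : F[X]) else 0 with hextdef
    have hext : ∀ g b, (ext g b).degree < ((r : ℕ) : WithBot ℕ) := by
      intro g b
      by_cases hb : b < m₁
      · simp only [hextdef, dif_pos hb]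
        exact mem_degreeLT.1 (g ⟨b, hb⟩).2
      · simp only [hextdef, dif_neg hb, degree_zero]
        exact WithBot.bot_lt_coe _
    set T : (Fin m₁ → ↥(degreeLT F r)) → ↥V := fun g =>
      ⟨∑ b ∈ Finset.range m₁, ext g b * h ^ b, ⟨ext g, hext g, rfl⟩⟩ with hTdef
    have hTinj : Function.Injective T := by
      intro g₁ g₂ hT
      have hval : ∑ b ∈ Finset.range m₁, ext g₁ b * h ^ b
          = ∑ b ∈ Finset.range m₁, ext g₂ b * h ^ b := congrArg Subtype.val hT
      have hs : ∑ b ∈ Finset.range m₁, (ext g₁ b - ext g₂ b) * h ^ b = 0 := by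
        have e : ∀ b ∈ Finset.range m₁, (ext g₁ b - ext g₂ b) * h ^ b
            = ext g₁ b * h ^ b - ext g₂ b * h ^ b := fun b _ => by ring
        rw [Finset.sum_congr rfl e, Finset.sum_sub_distrib, hval, sub_self]
      have hdlt : ∀ b, (ext g₁ b - ext g₂ b).degree < h.degree := by
        intro b
        rw [hdegh]
        exact lt_of_le_of_lt (degree_sub_le _ _)
          (lt_of_lt_of_le (max_lt (hext g₁ b) (hext g₂ b)) (by exact_mod_cast hrw.le))
      have hzero' := my_indep (by rw [hdegh]; exact hw0) m₁ _ hdlt hs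
      funext i
      refine Subtype.ext ?_
      have := hzero' i.1 i.isLt
      have e1 : ext g₁ i.1 = (g₁ i : F[X]) := by simp [hextdef]
      have e2 : ext g₂ i.1 = (g₂ i : F[X]) := by simp [hextdef]
      rw [e1, e2] at this
      exact sub_eq_zero.mp this
    have hTsurj : Function.Surjective T := by
      rintro ⟨G, g, hg, rfl⟩
      refine ⟨fun i => ⟨g i.1, mem_degreeLT.2 (hg i.1)⟩, Subtype.ext ?_⟩
      show (∑ b ∈ Finset.range m₁, _ * h ^ b) = _
      refine Finset.sum_congr rfl fun b hb => ?_
      rw [Finset.mem_range] at hb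
      simp [hextdef, dif_pos hb]
    calc Nat.card ↥V = Nat.card (Fin m₁ → ↥(degreeLT F r)) :=
        (Nat.card_congr (Equiv.ofBijective T ⟨hTinj, hTsurj⟩)).symm
      _ = Nat.card (Fin m₁ → Fin r → F) :=
        Nat.card_congr (Equiv.piCongrRight fun _ => (degreeLTEquiv F r).toEquiv)
      _ = Fintype.card F ^ (m₁ * r) := by
        rw [Nat.card_eq_fintype_card]
        simp only [Fintype.card_fun, Fintype.card_fin]
        rw [← pow_mul, mul_comm]
  have hUfin : U.Finite := by
    have hfin : Finite ↥(degreeLT F (m₁ * w)) :=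
      Finite.of_equiv _ (degreeLTEquiv F (m₁ * w)).toEquiv.symm
    have hsub : U ⊆ (degreeLT F (m₁ * w) : Submodule F F[X]) := fun G hG =>
      mem_degreeLT.2 hG.1
    exact Set.Finite.subset (Set.toFinite _) hsub
  have hcardU_le : Nat.card ↥U ≤ Fintype.card F ^ (m₁ * r) := by
    have hfin : Finite ↥(degreeLT F r) := Finite.of_equiv _ (degreeLTEquiv F r).toEquiv.symm
    set Φ : ↥U → (Fin m₁ → ↥(degreeLT F r)) := fun G i =>
      ⟨(G : F[X]) % (h - C (y (Fin.castLE hm' i))),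
        mem_degreeLT.2 (G.2.2 (Fin.castLE hm' i) (by simpa using i.isLt))⟩ with hΦdef
    have hΦinj : Function.Injective Φ := by
      intro G₁ G₂ hΦ
      have hmods : ∀ i : Fin m₁, (G₁ : F[X]) % (h - C (y (Fin.castLE hm' i)))
          = (G₂ : F[X]) % (h - C (y (Fin.castLE hm' i))) := fun i =>
        congrArg Subtype.val (congrFun hΦ i)
      have hdvd : ∀ i : Fin m, (i : ℕ) < m₁ → (h - C (y i)) ∣ ((G₁ : F[X]) - (G₂ : F[X])) := by
        intro i hi
        have hieq : i = Fin.castLE hm' ⟨(i : ℕ), hi⟩ := Fin.ext (by simp)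
        set p := h - C (y i) with hp
        have e1 : (G₁ : F[X]) - (G₁ : F[X]) % p = p * ((G₁ : F[X]) / p) := by
          rw [sub_eq_iff_eq_add']; exact (EuclideanDomain.mod_add_div _ p).symm
        have e2 : (G₂ : F[X]) - (G₂ : F[X]) % p = p * ((G₂ : F[X]) / p) := by
          rw [sub_eq_iff_eq_add']; exact (EuclideanDomain.mod_add_div _ p).symm
        have hmod : (G₁ : F[X]) % p = (G₂ : F[X]) % p := by
          rw [hp, hieq]; exact hmods ⟨(i : ℕ), hi⟩
        have : (G₁ : F[X]) - (G₂ : F[X])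
            = p * ((G₁ : F[X]) / p) - p * ((G₂ : F[X]) / p) := by
          rw [← e1, ← e2, hmod]; ring
        exact ⟨(G₁ : F[X]) / p - (G₂ : F[X]) / p, by rw [this]; ring⟩
      have h0 := hzero ((G₁ : F[X]) - (G₂ : F[X]))
        (lt_of_le_of_lt (degree_sub_le _ _) (max_lt G₁.2.1 G₂.2.1)) hdvd
      exact Subtype.ext (sub_eq_zero.mp h0)
    calc Nat.card ↥U ≤ Nat.card (Fin m₁ → ↥(degreeLT F r)) :=
        Nat.card_le_card_of_injective Φ hΦinj
      _ = Nat.card (Fin m₁ → Fin r → F) :=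
        Nat.card_congr (Equiv.piCongrRight fun _ => (degreeLTEquiv F r).toEquiv)
      _ = Fintype.card F ^ (m₁ * r) := by
        rw [Nat.card_eq_fintype_card]
        simp only [Fintype.card_fun, Fintype.card_fin]
        rw [← pow_mul, mul_comm]
  have hUV : U = V := by
    refine (Set.eq_of_subset_of_ncard_le hVU ?_ hUfin).symm
    rw [← Nat.card_coe_set_eq, ← Nat.card_coe_set_eq, hcardV]
    exact hcardU_le
  have hcardU : Nat.card ↥U = Fintype.card F ^ (m₁ * r) := by rw [hUV]; exact hcardV
  -- the evaluation map is injective on U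
  have hinj : Set.InjOn (fun G : F[X] => fun β : ↥Γ => G.eval β.1) U := by
    intro G₁ h1 G₂ h2 he
    have hsub : ∀ β ∈ Γ, (G₁ - G₂).eval β = 0 := by
      intro β hβ
      have := congrFun he ⟨β, hβ⟩
      simp only [eval_sub]
      simpa [sub_eq_zero] using this
    have h0 := hzeroΓ (G₁ - G₂)
      (lt_of_le_of_lt (degree_sub_le _ _) (max_lt h1.1 h2.1)) hsub
    exact sub_eq_zero.mp h0
  have hCode : Code = (fun G : F[X] => fun β : ↥Γ => G.eval β.1) '' U :=
    Set.ext fun c => ⟨fun ⟨G, h1, h2, h3⟩ => ⟨G, ⟨h1, h2⟩, h3.symm⟩,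
      fun ⟨G, ⟨h1, h2⟩, h3⟩ => ⟨G, h1, h2, h3.symm⟩⟩
  have hcardCode : Nat.card ↥Code = Fintype.card F ^ (m₁ * r) := by
    rw [hCode, Nat.card_coe_set_eq, Set.ncard_image_of_injOn hinj,
      ← Nat.card_coe_set_eq]
    exact hcardU
  refine ⟨hΓcard, hcardCode, ?_⟩
  -- minimum distance
  rintro c₁ ⟨G₁, hd₁, hrem₁, rfl⟩ c₂ ⟨G₂, hd₂, hrem₂, rfl⟩ hne
  obtain ⟨g₁, hg₁, rfl⟩ : G₁ ∈ V := hUV ▸ (⟨hd₁, hrem₁⟩ : G₁ ∈ U)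
  obtain ⟨g₂, hg₂, rfl⟩ : G₂ ∈ V := hUV ▸ (⟨hd₂, hrem₂⟩ : G₂ ∈ U)
  set G₁ : F[X] := ∑ b ∈ Finset.range m₁, g₁ b * h ^ b with hG₁
  set G₂ : F[X] := ∑ b ∈ Finset.range m₁, g₂ b * h ^ b with hG₂
  set D : F[X] := ∑ b ∈ Finset.range m₁, (g₁ b - g₂ b) * h ^ b with hD
  have hDeq : D = G₁ - G₂ := by
    rw [hD, hG₁, hG₂, ← Finset.sum_sub_distrib]
    exact Finset.sum_congr rfl fun b _ => by ring
  have hD0 : D ≠ 0 := by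
    intro h0
    rw [hDeq] at h0
    have hGG : G₁ = G₂ := sub_eq_zero.mp h0
    exact hne (funext fun β => by rw [hGG])
  have hdegD : D.natDegree < (m₁ - 1) * w + r :=
    (natDegree_lt_iff_degree_lt hD0).2 (my_deg_bound hdegh hm₁ hr0 _
      (fun b => lt_of_le_of_lt (degree_sub_le _ _) (max_lt (hg₁ b) (hg₂ b))))
  set A : Finset ↥Γ := Finset.univ.filter (fun β : ↥Γ => G₁.eval β.1 = G₂.eval β.1) with hA
  have hAcard : A.card ≤ D.natDegree := by
    have h1 : A.card ≤ D.roots.toFinset.card := by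
      refine Finset.card_le_card_of_injOn (fun β => (β : F)) ?_ ?_
      · intro β hβ
        rw [hA, Finset.mem_coe, Finset.mem_filter] at hβ
        rw [Finset.mem_coe, Multiset.mem_toFinset, mem_roots hD0, IsRoot.def, hDeq, eval_sub, sub_eq_zero]
        exact hβ.2
      · exact fun a _ b _ hab => Subtype.ext hab
    exact h1.trans ((Multiset.toFinset_card_le _).trans (card_roots' D))
  have hsplit := Finset.card_filter_add_card_filter_not
    (s := (Finset.univ : Finset ↥Γ)) (p := fun β : ↥Γ => G₁.eval β.1 = G₂.eval β.1)
  have huniv : (Finset.univ : Finset ↥Γ).card = m * w := by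
    rw [Finset.card_univ, Fintype.card_coe, hΓcard]
  have hham : hammingDist (fun β : ↥Γ => G₁.eval β.1) (fun β : ↥Γ => G₂.eval β.1)
      = (Finset.univ.filter (fun β : ↥Γ => ¬ (G₁.eval β.1 = G₂.eval β.1))).card := by
    simp only [hammingDist, ne_eq]
  rw [hham]
  rw [huniv] at hsplit
  set P : ℕ := (m₁ - 1) * w with hP
  set Q : ℕ := m₂ * w with hQ
  set M : ℕ := m * w with hM
  have e0 : m = (m₁ - 1) + 1 + m₂ := by omega
  have e1 : M = P + w + Q := by
    rw [hM, hP, hQ, e0, Nat.add_mul, Nat.add_mul, one_mul]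
  have e2 : (m₂ + 1) * w = Q + w := by
    rw [hQ, Nat.add_mul, one_mul]
  have key : ∀ p q mm fc aa dd : ℕ, r < w → mm = p + w + q → aa + fc = mm →
      dd < p + r → aa ≤ dd → q + w - r + 1 ≤ fc := by
    intro p q mm fc aa dd h1 h2 h3 h4 h5
    omega
  rw [e2]
  exact key P Q M _ A.card D.natDegree hrw e1 hsplit hdegD hAcard
end

section
/- Let C be an (N, K, k = Kr; L, δ)-RASL code over 𝔽_q in which each column is a repair set with (r, L − r + 1)-locality, where 0 < r ≤ L − 1, and let D be an integer with K ≤ D ≤ N − 1. Then for every i ∈ [N], every D-subset R ⊆ [N]∖{i}, and every repair scheme over 𝔽_q that recovers column i from the helper columns indexed by R — i.e., natural numbers (b_t)_{t∈R}, functions φ_t : 𝔽_q^L → 𝔽_q^{b_t} for t ∈ R, and a function Φ with c_i = Φ((φ_t(c_t))_{t∈R}) for every codeword c ∈ C — the total download satisfies Σ_{t∈R} b_t ≥ D·r/(D − K + 1). -/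
/-- Theorem 7 of the paper: cut-set bound for RASL codes. For an
`(N, K, k = Kr; L, δ)`-RASL code in which each column is a repair set with
`(r, L - r + 1)`-locality, the total download of any repair scheme recovering one
column from `D` helper columns is at least `D·r/(D - K + 1)`. -/
theorem rasl_cut_set_bound
    (F : Type*) [Field F] [Fintype F]
    (N K r δ L D : ℕ)
    (hr0 : 0 < r) (hrL : r < L) (hL : L + 1 = r + δ)
    (hK : 1 ≤ K) (hKD : K ≤ D) (hDN : D < N)
    (C : Set (Fin N → Fin L → F))
    (hcard : Nat.card C = Fintype.card F ^ (K * r))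
    (hMDS : ∀ c₁ ∈ C, ∀ c₂ ∈ C, ∀ S : Finset (Fin N), S.card = K →
      (∀ j ∈ S, c₁ j = c₂ j) → c₁ = c₂)
    (hloc : ∀ c₁ ∈ C, ∀ c₂ ∈ C, ∀ j : Fin N, ∀ T : Finset (Fin L), T.card = r →
      (∀ p ∈ T, c₁ j p = c₂ j p) → c₁ j = c₂ j) :
    ∀ i : Fin N, ∀ R : Finset (Fin N), R.card = D → i ∉ R →
    ∀ b : Fin N → ℕ,
    ∀ φ : (t : Fin N) → (Fin L → F) → (Fin (b t) → F),
    ∀ Φ : ((t : ↥R) → (Fin (b (t : Fin N)) → F)) → (Fin L → F),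
      (∀ c ∈ C, c i = Φ (fun t => φ t (c t))) →
      (D : ℚ) * (r : ℚ) / ((D : ℚ) - (K : ℚ) + 1) ≤ ∑ t ∈ R, (b t : ℚ) := by
  intro i R hR hiR b φ Φ hΦ
  have hq : 1 < Fintype.card F := Fintype.one_lt_card
  set q := Fintype.card F with hqdef
  have hD0 : 0 < D := lt_of_lt_of_le hK hKD
  set m := D - K + 1 with hm
  have hmD : m ≤ D := by omega
  have hm0 : 0 < m := by omega
  -- choose a set of r row positions
  obtain ⟨T, -, hT⟩ := Finset.exists_subset_card_eq
    (s := (Finset.univ : Finset (Fin L))) (n := r) (by simpa using hrL.le)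
  -- Step 1: any m helpers contribute at least r symbols
  have key : ∀ A : Finset (Fin N), A ⊆ R → A.card = m → r ≤ ∑ t ∈ A, b t := by
    intro A hAR hAm
    have hRA : (R \ A).card = K - 1 := by
      rw [Finset.card_sdiff_of_subset hAR, hR, hAm]; omega
    have hinj : Function.Injective (fun c : ↥C =>
        ((fun t (p : ↥T) => (c : Fin N → Fin L → F) t p,
          fun t : ↥A => φ t ((c : Fin N → Fin L → F) t)) :
          ((t : ↥(R \ A)) → (↥T → F)) × ((t : ↥A) → (Fin (b (t : Fin N)) → F)))) := by
      rintro ⟨c₁, hc₁⟩ ⟨c₂, hc₂⟩ h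
      simp only [Prod.mk.injEq] at h
      obtain ⟨h1, h2⟩ := h
      have hcols : ∀ t ∈ R \ A, c₁ t = c₂ t := by
        intro t ht
        apply hloc c₁ hc₁ c₂ hc₂ t T hT
        intro p hp
        exact congrFun (congrFun h1 ⟨t, ht⟩) ⟨p, hp⟩
      have hmsg : (fun t : ↥R => φ t (c₁ t)) = fun t : ↥R => φ t (c₂ t) := by
        funext t
        by_cases htA : (t : Fin N) ∈ A
        · exact congrFun h2 ⟨t, htA⟩
        · rw [hcols t (Finset.mem_sdiff.mpr ⟨t.2, htA⟩)]
      have hi : c₁ i = c₂ i := by rw [hΦ c₁ hc₁, hΦ c₂ hc₂, hmsg]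
      have hc : c₁ = c₂ := by
        apply hMDS c₁ hc₁ c₂ hc₂ (insert i (R \ A))
        · rw [Finset.card_insert_of_notMem
            (fun h => hiR (Finset.mem_sdiff.mp h).1), hRA]
          omega
        · intro j hj
          rcases Finset.mem_insert.mp hj with h | h
          · subst h; exact hi
          · exact hcols j h
      exact Subtype.ext hc
    have hcard_le : Nat.card C ≤
        Nat.card (((t : ↥(R \ A)) → (↥T → F)) ×
          ((t : ↥A) → (Fin (b (t : Fin N)) → F))) :=
      Nat.card_le_card_of_injective _ hinj
    have hX1 : Fintype.card ((t : ↥(R \ A)) → (↥T → F)) = q ^ ((K - 1) * r) := by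
      rw [Fintype.card_pi]
      have h1 : ∀ t : ↥(R \ A), Fintype.card (↥T → F) = q ^ r := by
        intro t; rw [Fintype.card_fun, Fintype.card_coe, hT]
      rw [Finset.prod_congr rfl (fun t _ => h1 t), Finset.prod_const,
        Finset.card_univ, Fintype.card_coe, hRA, ← pow_mul]
      ring_nf
    have hX2 : Fintype.card ((t : ↥A) → (Fin (b (t : Fin N)) → F))
        = q ^ (∑ t ∈ A, b t) := by
      rw [Fintype.card_pi]
      simp only [Fintype.card_fun, Fintype.card_fin]
      calc ∏ x : ↥A, q ^ b (x : Fin N)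
          = ∏ t ∈ A, q ^ b t := Finset.prod_coe_sort A (fun t => q ^ b t)
        _ = q ^ ∑ t ∈ A, b t := by rw [Finset.prod_pow_eq_pow_sum]
    have hXcard : Nat.card (((t : ↥(R \ A)) → (↥T → F)) ×
        ((t : ↥A) → (Fin (b (t : Fin N)) → F)))
        = q ^ ((K - 1) * r + ∑ t ∈ A, b t) := by
      rw [Nat.card_eq_fintype_card, Fintype.card_prod, hX1, hX2, pow_add]
    rw [hcard, hXcard] at hcard_le
    have hle : K * r ≤ (K - 1) * r + ∑ t ∈ A, b t :=
      (Nat.pow_le_pow_iff_right hq).mp hcard_le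
    have hKr : K * r = (K - 1) * r + r := by
      obtain ⟨k, rfl⟩ := Nat.exists_eq_add_of_le hK
      simp [Nat.add_sub_cancel_left, add_mul, one_mul, Nat.add_comm]
    omega
  -- Step 2: averaging over cyclic windows
  haveI : NeZero D := ⟨hD0.ne'⟩
  letI : NatCast (Fin D) := Fin.NatCast.instNatCast (n := D)
  let e : Fin D ≃ ↥R := (R.equivFinOfCardEq hR).symm
  let f : Fin D → ℕ → Fin N := fun j n => ((e (j + (n : Fin D))) : Fin N)
  have hfinj : ∀ j : Fin D, ∀ x ∈ Finset.range m, ∀ y ∈ Finset.range m,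
      f j x = f j y → x = y := by
    intro j x hx y hy hxy
    simp only [Finset.mem_range] at hx hy
    have h1 : e (j + (x : Fin D)) = e (j + (y : Fin D)) :=
      Subtype.coe_injective hxy
    have h2 : (x : Fin D) = (y : Fin D) := by
      have := e.injective h1
      exact add_left_cancel this
    have hxD : x < D := lt_of_lt_of_le hx hmD
    have hyD : y < D := lt_of_lt_of_le hy hmD
    have := congrArg Fin.val h2
    rwa [Fin.val_cast_of_lt hxD, Fin.val_cast_of_lt hyD] at this
  have hwin : ∀ j : Fin D, r ≤ ∑ x ∈ Finset.range m, b (f j x) := by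
    intro j
    have hsub : (Finset.range m).image (f j) ⊆ R := by
      intro t ht
      obtain ⟨x, -, rfl⟩ := Finset.mem_image.mp ht
      exact (e _).2
    have hcard' : ((Finset.range m).image (f j)).card = m := by
      rw [Finset.card_image_of_injOn (fun x hx y hy => hfinj j x hx y hy),
        Finset.card_range]
    have := key _ hsub hcard'
    rwa [Finset.sum_image (hfinj j)] at this
  have hsum : ∑ j : Fin D, ∑ x ∈ Finset.range m, b (f j x)
      = m * ∑ t ∈ R, b t := by
    rw [Finset.sum_comm]
    have hinner : ∀ x ∈ Finset.range m,
        ∑ j : Fin D, b (f j x) = ∑ t ∈ R, b t := by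
      intro x _
      have h1 : ∑ j : Fin D, b (f j x)
          = ∑ j : Fin D, b ((e j : Fin N)) :=
        Equiv.sum_comp (Equiv.addRight ((x : Fin D))) (fun j => b ((e j : Fin N)))
      rw [h1]
      have h2 : ∑ j : Fin D, b ((e j : Fin N)) = ∑ t : ↥R, b (t : Fin N) :=
        Equiv.sum_comp e (fun t => b (t : Fin N))
      rw [h2]
      exact Finset.sum_coe_sort R b
    rw [Finset.sum_congr rfl hinner, Finset.sum_const, Finset.card_range,
      smul_eq_mul]
  have hfin : D * r ≤ m * ∑ t ∈ R, b t := by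
    calc D * r = ∑ _j : Fin D, r := by
          rw [Finset.sum_const, Finset.card_univ, Fintype.card_fin, smul_eq_mul]
      _ ≤ ∑ j : Fin D, ∑ x ∈ Finset.range m, b (f j x) :=
          Finset.sum_le_sum (fun j _ => hwin j)
      _ = m * ∑ t ∈ R, b t := hsum
  -- conclude in ℚ
  have hmq : ((D : ℚ) - (K : ℚ) + 1) = (m : ℚ) := by
    rw [hm]
    push_cast [Nat.cast_sub hKD]
    ring
  have hmpos : (0 : ℚ) < (D : ℚ) - (K : ℚ) + 1 := by
    rw [hmq]; exact_mod_cast hm0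
  rw [div_le_iff₀ hmpos, hmq]
  have hfinq : (D : ℚ) * (r : ℚ) ≤ ((∑ t ∈ R, b t : ℕ) : ℚ) * (m : ℚ) := by
    rw [mul_comm ((∑ t ∈ R, b t : ℕ) : ℚ)]
    exact_mod_cast hfin
  calc (D : ℚ) * (r : ℚ) ≤ ((∑ t ∈ R, b t : ℕ) : ℚ) * (m : ℚ) := hfinq
    _ = (∑ t ∈ R, (b t : ℚ)) * (m : ℚ) := by push_cast; ring
end

section
/- Let 𝔽_{q₁} be a subfield of the finite field 𝔽_q with q = q₁^ℓ, and let 𝒜 be the array-form Tamo–Barg code over 𝔽_q. Let i₁ < ⋯ < i_τ be indices in [m] and let E_{i_t} ⊆ [L] with |E_{i_t}| ≥ δ for each t ∈ [τ] be the erased positions of column A_{i_t}. If m₂ ≥ q·τ/q₁, then, setting M = Σ_{t∈[τ]} |E_{i_t}| − τ·(δ − 1), the erasure pattern can be recovered by contacting all remaining racks with each helper sending M elements of 𝔽_{q₁} (i.e., M/ℓ symbols of 𝔽_q): there exist functions φ_j : 𝔽_q^L → 𝔽_{q₁}^M for every j ∈ [m]∖{i₁, …, i_τ} and a function Φ such that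 for every codeword (A₁, …, A_m) ∈ 𝒜, the tuple of erased entries ((A_{i_t})|_{E_{i_t}})_{t∈[τ]} equals Φ applied to the helper messages ((φ_j(A_j))_{j∈[m]∖{i₁,…,i_τ}}) together with the surviving entries ((A_{i_t})|_{[L]∖E_{i_t}})_{t∈[τ]}. -/
open Polynomial

lemma poly_eq_on_finset {F : Type*} [Field F] (S : Finset F) (p q : F[X])
    (hp : p.natDegree < S.card) (hq : q.natDegree < S.card)
    (hev : ∀ x ∈ S, p.eval x = q.eval x) : p = q := by
  have h0 : p - q = 0 := by
    apply Polynomial.eq_zero_of_natDegree_lt_card_of_eval_eq_zero' (p - q) S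
    · intro x hx; simp [hev x hx]
    · exact lt_of_le_of_lt (Polynomial.natDegree_sub_le p q) (max_lt hp hq)
  linear_combination (norm := ring_nf) h0

lemma dual_sum {F : Type*} [Field F] {n : ℕ} (yy : Fin n → F)
    (hy : Function.Injective yy) (v : F[X]) (hv : v.natDegree + 2 ≤ n) :
    ∑ j : Fin n, v.eval (yy j) * (∏ j' ∈ Finset.univ.erase j, (yy j - yy j'))⁻¹ = 0 := by
  classical
  set W : Fin n → F := fun j => ∏ j' ∈ Finset.univ.erase j, (yy j - yy j') with hW
  have hWne : ∀ j, W j ≠ 0 := by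
    intro j
    refine Finset.prod_ne_zero_iff.2 ?_
    intro j' hj'
    exact sub_ne_zero.2 fun hh => (Finset.mem_erase.1 hj').1 (hy hh).symm
  set Pb : Fin n → F[X] := fun j => ∏ j' ∈ Finset.univ.erase j, (X - C (yy j')) with hPb
  have hmonic : ∀ j, (Pb j).Monic := fun j =>
    monic_prod_of_monic _ _ fun j' _ => monic_X_sub_C _
  have hdegPb : ∀ j, (Pb j).natDegree = n - 1 := by
    intro j
    rw [hPb]
    rw [Polynomial.natDegree_prod_of_monic _ _ fun j' _ => monic_X_sub_C _]
    simp [Finset.card_erase_of_mem]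
  have hevalPb : ∀ j k, (Pb j).eval (yy k) = ∏ j' ∈ Finset.univ.erase j, (yy k - yy j') := by
    intro j k; rw [hPb]; simp [Polynomial.eval_prod]
  set P : F[X] := ∑ j : Fin n, C (v.eval (yy j) * (W j)⁻¹) * Pb j with hP
  have hPev : ∀ k, P.eval (yy k) = v.eval (yy k) := by
    intro k
    rw [hP, Polynomial.eval_finset_sum]
    rw [Finset.sum_eq_single k]
    · rw [Polynomial.eval_mul, Polynomial.eval_C, hevalPb]
      change eval (yy k) v * (W k)⁻¹ * W k = eval (yy k) v
      rw [mul_assoc, inv_mul_cancel₀ (hWne k), mul_one]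
    · intro j _ hjk
      rw [Polynomial.eval_mul, hevalPb]
      have : ∏ j' ∈ Finset.univ.erase j, (yy k - yy j') = 0 := by
        apply Finset.prod_eq_zero (i := k)
        · exact Finset.mem_erase.2 ⟨fun hh => hjk hh.symm, Finset.mem_univ _⟩
        · simp
      rw [this, mul_zero]
    · simp
  have hn2 : 2 ≤ n := le_trans (by omega) hv
  have hPdeg : P.natDegree < n := by
    have : P.natDegree ≤ n - 1 := by
      apply Polynomial.natDegree_sum_le_of_forall_le
      intro j _
      refine le_trans (Polynomial.natDegree_C_mul_le _ _) ?_
      rw [hdegPb]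
    omega
  have hPeqv : P = v := by
    apply poly_eq_on_finset (Finset.univ.image yy)
    · rwa [Finset.card_image_of_injective _ hy, Finset.card_univ, Fintype.card_fin]
    · rw [Finset.card_image_of_injective _ hy, Finset.card_univ, Fintype.card_fin]; omega
    · intro x hx
      obtain ⟨k, _, rfl⟩ := Finset.mem_image.1 hx
      exact hPev k
  have hcoeffv : v.coeff (n - 1) = 0 :=
    Polynomial.coeff_eq_zero_of_natDegree_lt (by omega)
  have hcoeffP : P.coeff (n - 1) = ∑ j : Fin n, v.eval (yy j) * (W j)⁻¹ := by
    rw [hP, Polynomial.finset_sum_coeff]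
    apply Finset.sum_congr rfl
    intro j _
    rw [Polynomial.coeff_C_mul]
    have : (Pb j).coeff (n - 1) = 1 := by
      have := (hmonic j).coeff_natDegree
      rwa [hdegPb] at this
    rw [this, mul_one]
  rw [← hcoeffP, hPeqv, hcoeffv]

noncomputable def trF {F : Type*} [Field F] (q₁ ℓ : ℕ) (s : F) : F :=
  ∑ i ∈ Finset.range ℓ, s ^ (q₁ ^ i)

lemma trF_props {F : Type*} [Field F] [Fintype F] (K₁ : Subfield F) (ℓ : ℕ)
    (hcard : Fintype.card F = Nat.card ↥K₁ ^ ℓ) (hℓ : 1 ≤ ℓ) :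
    (∀ x y : F, trF (Nat.card ↥K₁) ℓ (x - y)
        = trF (Nat.card ↥K₁) ℓ x - trF (Nat.card ↥K₁) ℓ y) ∧
    (∀ s : F, trF (Nat.card ↥K₁) ℓ s ∈ K₁) ∧
    (∀ c x : F, c ∈ K₁ → trF (Nat.card ↥K₁) ℓ (c * x) = c * trF (Nat.card ↥K₁) ℓ x) ∧
    (∃ s : F, trF (Nat.card ↥K₁) ℓ s ≠ 0) := by
  classical
  haveI : Fintype ↥K₁ := Fintype.ofFinite _
  set q₁ := Nat.card ↥K₁ with hq₁def
  have hq₁card : q₁ = Fintype.card ↥K₁ := Nat.card_eq_fintype_card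
  have hq₁2 : 2 ≤ q₁ := by rw [hq₁card]; exact Fintype.one_lt_card
  set p := ringChar ↥K₁ with hpdef
  haveI hcharK : CharP ↥K₁ p := ringChar.charP _
  haveI hcharF : CharP F p :=
    charP_of_injective_ringHom (f := K₁.subtype) Subtype.coe_injective p
  obtain ⟨n, hp, hcardK⟩ := FiniteField.card ↥K₁ p
  haveI : Fact p.Prime := ⟨hp⟩
  haveI : ExpChar F p := ExpChar.prime hp
  have hq₁pn : q₁ = p ^ (n : ℕ) := by rw [hq₁card, hcardK]
  have hpowsub : ∀ (x y : F) (i : ℕ), (x - y) ^ q₁ ^ i = x ^ q₁ ^ i - y ^ q₁ ^ i := by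
    intro x y i
    simp only [hq₁pn, ← pow_mul]
    exact sub_pow_char_pow x y _
  have htr_sub : ∀ x y : F, trF q₁ ℓ (x - y) = trF q₁ ℓ x - trF q₁ ℓ y := by
    intro x y
    unfold trF
    rw [← Finset.sum_sub_distrib]
    exact Finset.sum_congr rfl fun i _ => hpowsub x y i
  have hK₁fix : ∀ c : F, c ∈ K₁ → c ^ q₁ = c := by
    intro c hc
    have h1 : (⟨c, hc⟩ : ↥K₁) ^ Fintype.card ↥K₁ = ⟨c, hc⟩ := FiniteField.pow_card _
    have h2 := congrArg (fun z : ↥K₁ => (z : F)) h1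
    simpa [hq₁card] using h2
  have hfix_mem : ∀ x : F, x ^ q₁ = x → x ∈ K₁ := by
    intro x hx
    set T : Finset F := Finset.univ.image (fun c : ↥K₁ => (c : F)) with hT
    have hTcard : T.card = q₁ := by
      rw [hT, Finset.card_image_of_injective _ Subtype.coe_injective, Finset.card_univ,
        hq₁card]
    set P : F[X] := X ^ q₁ - X with hP
    have hPne : P ≠ 0 := by
      intro h0
      have hc : P.coeff q₁ = 1 := by
        rw [hP, Polynomial.coeff_sub, Polynomial.coeff_X_pow, if_pos rfl,
          Polynomial.coeff_X, if_neg (by omega)]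
        ring
      rw [h0] at hc
      simp at hc
    have hPdeg : P.natDegree ≤ q₁ := by
      refine le_trans (Polynomial.natDegree_sub_le _ _) ?_
      simp only [Polynomial.natDegree_X_pow, Polynomial.natDegree_X]
      omega
    have hroot : ∀ z : F, z ^ q₁ = z → z ∈ P.roots.toFinset := by
      intro z hz
      rw [Multiset.mem_toFinset, Polynomial.mem_roots hPne]
      show P.eval z = 0
      rw [hP]
      simp [hz]
    have hsub : T ⊆ P.roots.toFinset := by
      intro x hxT
      rw [hT, Finset.mem_image] at hxT
      obtain ⟨c, _, rfl⟩ := hxT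
      exact hroot _ (hK₁fix _ c.2)
    have hTeq : T = P.roots.toFinset := by
      refine Finset.eq_of_subset_of_card_le hsub ?_
      rw [hTcard]
      exact le_trans (Multiset.toFinset_card_le _) (le_trans (Polynomial.card_roots' P) hPdeg)
    have hxT : x ∈ T := by rw [hTeq]; exact hroot x hx
    rw [hT, Finset.mem_image] at hxT
    obtain ⟨c, _, rfl⟩ := hxT
    exact c.2
  have htr_fix : ∀ s : F, (trF q₁ ℓ s) ^ q₁ = trF q₁ ℓ s := by
    intro s
    have h1 : (trF q₁ ℓ s) ^ q₁ = ∑ i ∈ Finset.range ℓ, s ^ q₁ ^ (i + 1) := by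
      have := map_sum (iterateFrobenius F p n) (fun i => s ^ q₁ ^ i) (Finset.range ℓ)
      rw [iterateFrobenius_def] at this
      unfold trF
      rw [← hq₁pn] at this
      rw [this]
      refine Finset.sum_congr rfl fun i _ => ?_
      rw [iterateFrobenius_def, ← hq₁pn, ← pow_mul, ← pow_succ]
    have hsq : s ^ q₁ ^ ℓ = s := by
      have := FiniteField.pow_card s
      rwa [hcard] at this
    have e1 := Finset.sum_range_succ (fun i => s ^ q₁ ^ i) ℓ
    have e2 := Finset.sum_range_succ' (fun i => s ^ q₁ ^ i) ℓ
    rw [e1] at e2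
    simp only [hsq, pow_zero, pow_one] at e2
    rw [h1]
    unfold trF
    exact add_right_cancel e2.symm
  have htr_mem : ∀ s : F, trF q₁ ℓ s ∈ K₁ := fun s => hfix_mem _ (htr_fix s)
  have htr_smul : ∀ c x : F, c ∈ K₁ → trF q₁ ℓ (c * x) = c * trF q₁ ℓ x := by
    intro c x hc
    have hci : ∀ i : ℕ, c ^ q₁ ^ i = c := by
      intro i
      induction i with
      | zero => simp
      | succ i ih => rw [pow_succ, pow_mul, ih, hK₁fix c hc]
    unfold trF
    rw [Finset.mul_sum]
    exact Finset.sum_congr rfl fun i _ => by rw [mul_pow, hci]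
  have htr_ne : ∃ s : F, trF q₁ ℓ s ≠ 0 := by
    by_contra hno
    push_neg at hno
    set TRp : F[X] := ∑ i ∈ Finset.range ℓ, (X : F[X]) ^ q₁ ^ i with hTRp
    have hTRzero : TRp = 0 := by
      apply Polynomial.eq_zero_of_natDegree_lt_card_of_eval_eq_zero' TRp Finset.univ
      · intro x _
        rw [hTRp, Polynomial.eval_finset_sum]
        simpa [trF] using hno x
      · rw [Finset.card_univ, hcard]
        have h1 : TRp.natDegree ≤ q₁ ^ (ℓ - 1) := by
          apply Polynomial.natDegree_sum_le_of_forall_le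
          intro i hi
          rw [Polynomial.natDegree_X_pow]
          exact Nat.pow_le_pow_right (by omega) (by
            have := Finset.mem_range.1 hi; omega)
        have h2 : q₁ ^ (ℓ - 1) < q₁ ^ ℓ := Nat.pow_lt_pow_right (by omega) (by omega)
        omega
    have hc1 : TRp.coeff 1 = 1 := by
      rw [hTRp, Polynomial.finset_sum_coeff]
      rw [Finset.sum_eq_single_of_mem 0 (Finset.mem_range.2 (by omega))]
      · simp
      · intro i _ hi0
        rw [Polynomial.coeff_X_pow]
        refine if_neg fun hcontra => ?_
        have : 1 < q₁ ^ i := Nat.one_lt_pow hi0 (by omega)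
        omega
    rw [hTRzero] at hc1
    simp at hc1
  exact ⟨htr_sub, htr_mem, htr_smul, htr_ne⟩

lemma tb_decomp {F : Type*} [Field F] {m m₁ L rr : ℕ} (hm₁ : 1 ≤ m₁) (hm₁m : m₁ ≤ m)
    (hrr : 1 ≤ rr) (hrL : rr ≤ L) (hL1 : 1 ≤ L)
    (y : Fin m → F) (hy : Function.Injective y)
    (h : F[X]) (hdeg : h.degree = ((L : ℕ) : WithBot ℕ))
    (G : F[X]) (hGdeg : G.degree < ((m₁ * L : ℕ) : WithBot ℕ))
    (hGmod : ∀ t : Fin m, (t : ℕ) < m₁ →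
      (G % (h - C (y t))).degree < ((rr : ℕ) : WithBot ℕ)) :
    ∃ f : Fin rr → F[X], (∀ a, (f a).natDegree ≤ m₁ - 1) ∧
      G = ∑ a : Fin rr, (f a).comp h * X ^ (a : ℕ) := by
  classical
  have hhnat : h.natDegree = L := natDegree_eq_of_degree_eq_some hdeg
  have hdpos : 0 < h.degree := by rw [hdeg]; exact_mod_cast hL1
  set emb : Fin m₁ → Fin m := fun i => ⟨i.1, lt_of_lt_of_le i.2 hm₁m⟩ with hemb
  set v : Fin m₁ → F := fun i => y (emb i) with hv
  have hvinj : Function.Injective v := by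
    intro i j hij
    have h2 := hy hij
    have h3 : (emb i).val = (emb j).val := congrArg Fin.val h2
    exact Fin.ext h3
  have hd : ∀ i : Fin m₁, (h - C (v i)).degree = ((L : ℕ) : WithBot ℕ) := by
    intro i; rw [Polynomial.degree_sub_C hdpos, hdeg]
  have hdne : ∀ i : Fin m₁, (h - C (v i)) ≠ 0 := by
    intro i h0
    have h1 := hd i
    rw [h0, Polynomial.degree_zero] at h1
    simp at h1
  have hdnat : ∀ i : Fin m₁, (h - C (v i)).natDegree = L :=
    fun i => natDegree_eq_of_degree_eq_some (hd i)
  set f : Fin rr → F[X] := fun a =>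
    (Lagrange.interpolate Finset.univ v) (fun i => (G % (h - C (v i))).coeff a) with hf
  have hinjOn : Set.InjOn v ↑(Finset.univ : Finset (Fin m₁)) := hvinj.injOn
  have hfdeg : ∀ a, (f a).natDegree ≤ m₁ - 1 := by
    intro a
    have := Lagrange.degree_interpolate_lt (s := Finset.univ) (v := v)
      (fun i => (G % (h - C (v i))).coeff a) hinjOn
    rw [Finset.card_univ, Fintype.card_fin] at this
    rcases eq_or_ne (f a) 0 with h0 | h0
    · rw [h0]; simp
    · have := (Polynomial.natDegree_lt_iff_degree_lt h0).2 (by exact_mod_cast this)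
      omega
  have hnode : ∀ (a : Fin rr) (i : Fin m₁),
      (f a).eval (v i) = (G % (h - C (v i))).coeff a := by
    intro a i
    exact Lagrange.eval_interpolate_at_node _ hinjOn (Finset.mem_univ i)
  set G' : F[X] := ∑ a : Fin rr, (f a).comp h * X ^ (a : ℕ) with hG'
  have hdvd : ∀ i : Fin m₁, (h - C (v i)) ∣ (G - G') := by
    intro i
    set d : F[X] := h - C (v i) with hdd
    have hmodlt : (G % d).natDegree < rr := by
      have hmod := hGmod (emb i) i.2
      have : (G % (h - C (y (emb i)))) = G % d := by rw [hdd, hv]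
      rw [this] at hmod
      rcases eq_or_ne (G % d) 0 with h0 | h0
      · rw [h0]; simpa using (show 0 < rr by omega)
      · exact (Polynomial.natDegree_lt_iff_degree_lt h0).2 hmod
    have hmodeq : G % d = ∑ a : Fin rr, C ((G % d).coeff a) * X ^ (a : ℕ) := by
      conv_lhs => rw [Polynomial.as_sum_range' _ rr hmodlt]
      rw [Finset.sum_range (fun a => (Polynomial.monomial a) ((G % d).coeff a))]
      exact Finset.sum_congr rfl fun a _ => (Polynomial.C_mul_X_pow_eq_monomial).symm
    have hsub : ∀ a : Fin rr, d ∣ ((f a).comp h - C ((f a).eval (v i))) := by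
      intro a
      obtain ⟨k, hk⟩ := Polynomial.X_sub_C_dvd_sub_C_eval (a := v i) (p := f a)
      refine ⟨k.comp h, ?_⟩
      have := congrArg (fun pp : F[X] => pp.comp h) hk
      simpa [Polynomial.sub_comp, Polynomial.C_comp, Polynomial.mul_comp,
        Polynomial.X_comp] using this
    have hdvd2 : d ∣ (G' - G % d) := by
      have hsplit : G' - G % d
          = ∑ a : Fin rr, ((f a).comp h - C ((f a).eval (v i))) * X ^ (a : ℕ) := by
        rw [hG']
        conv_lhs => rw [hmodeq]
        rw [← Finset.sum_sub_distrib]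
        refine Finset.sum_congr rfl fun a _ => ?_
        rw [hnode a i, sub_mul]
      rw [hsplit]
      exact Finset.dvd_sum fun a _ => Dvd.dvd.mul_right (hsub a) _
    have hGsplit : G - G' = d * (G / d) + (G % d - G') := by
      have hdm := EuclideanDomain.div_add_mod G d
      linear_combination -hdm
    rw [hGsplit]
    apply dvd_add
    · exact dvd_mul_right d (G / d)
    · have h3 : G % d - G' = -(G' - G % d) := by ring
      rw [h3]
      exact (dvd_neg).2 hdvd2
  have hpair : (((Finset.univ : Finset (Fin m₁)) : Set (Fin m₁))).Pairwise
      (Function.onFun IsCoprime fun i => h - C (v i)) := by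
    intro i _ j _ hij
    have hne : v j - v i ≠ 0 := sub_ne_zero.2 fun hh => hij (hvinj hh.symm)
    refine ⟨C ((v j - v i)⁻¹), -C ((v j - v i)⁻¹), ?_⟩
    have h1 : C ((v j - v i)⁻¹) * (h - C (v i)) + -C ((v j - v i)⁻¹) * (h - C (v j))
        = C ((v j - v i)⁻¹) * (C (v j) - C (v i)) := by ring
    rw [h1, ← Polynomial.C_sub, ← Polynomial.C_mul, inv_mul_cancel₀ hne, Polynomial.C_1]
  have hprodvd : (∏ i : Fin m₁, (h - C (v i))) ∣ (G - G') :=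
    Finset.prod_dvd_of_coprime hpair fun i _ => hdvd i
  rcases eq_or_ne (G - G') 0 with h0 | h0
  · exact ⟨f, hfdeg, by rw [← hG', sub_eq_zero.1 h0]⟩
  · exfalso
    have hG'deg : G'.natDegree ≤ (m₁ - 1) * L + (rr - 1) := by
      rw [hG']
      apply Polynomial.natDegree_sum_le_of_forall_le
      intro a _
      refine le_trans (Polynomial.natDegree_mul_le) ?_
      have h1 : ((f a).comp h).natDegree ≤ (m₁ - 1) * L := by
        rw [Polynomial.natDegree_comp, hhnat]
        exact Nat.mul_le_mul_right _ (hfdeg a)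
      have h2 : ((X : F[X]) ^ (a : ℕ)).natDegree ≤ rr - 1 := by
        rw [Polynomial.natDegree_X_pow]
        omega
      omega
    have harith : (m₁ - 1) * L + (rr - 1) < m₁ * L := by
      have hmL : m₁ * L = (m₁ - 1) * L + L := by
        conv_lhs => rw [← Nat.sub_add_cancel hm₁]
        rw [Nat.succ_mul]
      omega
    have hG'lt : G'.degree < ((m₁ * L : ℕ) : WithBot ℕ) :=
      lt_of_le_of_lt (Polynomial.degree_le_natDegree)
        (by exact_mod_cast lt_of_le_of_lt hG'deg harith)
    have hsubdeg : (G - G').degree < ((m₁ * L : ℕ) : WithBot ℕ) :=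
      lt_of_le_of_lt (Polynomial.degree_sub_le _ _) (max_lt hGdeg hG'lt)
    have hprodne : (∏ i : Fin m₁, (h - C (v i))) ≠ 0 :=
      Finset.prod_ne_zero_iff.2 fun i _ => hdne i
    have hproddeg : (∏ i : Fin m₁, (h - C (v i))).natDegree = m₁ * L := by
      rw [Polynomial.natDegree_prod _ _ fun i _ => hdne i]
      simp [hdnat, Finset.sum_const, Finset.card_univ, mul_comm]
    have hle := Polynomial.degree_le_of_dvd hprodvd h0
    rw [Polynomial.degree_eq_natDegree hprodne, hproddeg] at hle
    exact absurd (lt_of_le_of_lt hle hsubdeg) (lt_irrefl _)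
/-- The array-form Tamo–Barg code (Construction 2 of the paper). -/
def TBArrayCode {F : Type*} [Field F] (m m₁ L r : ℕ)
    (y : Fin m → F) (h : F[X]) (β : Fin m → Fin L → F) :
    Set (Fin m → Fin L → F) :=
  {A | ∃ G : F[X], G.degree < ((m₁ * L : ℕ) : WithBot ℕ) ∧
    (∀ t : Fin m, (t : ℕ) < m₁ →
      (G % (h - C (y t))).degree < ((r : ℕ) : WithBot ℕ)) ∧
    A = fun t j => G.eval (β t j)}

set_option maxHeartbeats 3200000 in
/-- Theorem 10 of the paper: repairing multiple partial rack erasures.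
Let `𝔽_{q₁} ⊆ 𝔽_q` with `q = q₁^ℓ`, and suppose columns `i₁ < ⋯ < i_τ` suffer erasure
patterns `E_{i_t}` with `|E_{i_t}| ≥ δ`. If `m₂ ≥ q·τ/q₁` (i.e. `m₂·q₁ ≥ q·τ`), then,
with `M = ∑_t |E_{i_t}| - τ·(δ-1)`, the erasures can be recovered by contacting all the
remaining racks, each sending `M` elements of `𝔽_{q₁}` (i.e. `M/ℓ` symbols of `𝔽_q`). -/
theorem tamo_barg_multiple_partial_erasure_repair
    (F : Type*) [Field F] [Fintype F]
    (K₁ : Subfield F) (ℓ : ℕ) (hℓ : Nat.card F = Nat.card K₁ ^ ℓ)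
    (m m₁ m₂ r δ L : ℕ)
    (hm : m = m₁ + m₂) (hm₁ : 1 ≤ m₁) (hr : 1 ≤ r) (hδ : 2 ≤ δ) (hL : L + 1 = r + δ)
    (y : Fin m → F) (hy : Function.Injective y)
    (h : F[X]) (hdeg : h.degree = ((L : ℕ) : WithBot ℕ))
    (β : Fin m → Fin L → F)
    (hβinj : ∀ i : Fin m, Function.Injective (β i))
    (hβroot : ∀ (i : Fin m) (j : Fin L), h.eval (β i j) = y i)
    (τ : ℕ) (idx : Fin τ → Fin m) (hidx : StrictMono idx)
    (E : Fin τ → Finset (Fin L)) (hE : ∀ t : Fin τ, δ ≤ (E t).card)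
    (hm₂ : Nat.card F * τ ≤ m₂ * Nat.card K₁)
    (M : ℕ) (hM : M = (∑ t : Fin τ, (E t).card) - τ * (δ - 1)) :
    ∃ φ : (j : {j : Fin m // j ∉ Set.range idx}) → (Fin L → F) → (Fin M → ↥K₁),
    ∃ Φ : ((j : {j : Fin m // j ∉ Set.range idx}) → (Fin M → ↥K₁)) →
          ((t : Fin τ) → ({p : Fin L // p ∉ E t} → F)) →
          ((t : Fin τ) → (↥(E t) → F)),
      ∀ A ∈ TBArrayCode m m₁ L r y h β,
        (fun (t : Fin τ) (p : ↥(E t)) => A (idx t) p.1) =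
          Φ (fun j => φ j (A j.1)) (fun t p => A (idx t) p.1) := by
  classical
  haveI : Fintype ↥K₁ := Fintype.ofFinite _
  set q₁ := Nat.card ↥K₁ with hq₁def
  have hq₁2 : 2 ≤ q₁ := by
    rw [hq₁def, Nat.card_eq_fintype_card]; exact Fintype.one_lt_card
  have hqF : Fintype.card F = q₁ ^ ℓ := by
    rw [← Nat.card_eq_fintype_card, hℓ]
  have hL1 : 1 ≤ L := by omega
  have hrL : r ≤ L := by omega
  have hℓ1 : 1 ≤ ℓ := by
    by_contra hcon
    have hc0 : ℓ = 0 := by omega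
    rw [hc0, pow_zero] at hqF
    have := Fintype.one_lt_card (α := F)
    omega
  obtain ⟨htr_sub, htr_mem, htr_smul, htr_ne⟩ := trF_props K₁ ℓ hqF hℓ1
  have htr_zero : trF q₁ ℓ (0 : F) = 0 := by
    have h1 := htr_sub 0 0
    simp only [sub_self] at h1
    exact h1
  have htr_add : ∀ x y' : F, trF q₁ ℓ (x + y') = trF q₁ ℓ x + trF q₁ ℓ y' := by
    intro x y'
    have h1 : x + y' = x - (0 - y') := by ring
    rw [h1, htr_sub, htr_sub, htr_zero]
    ring
  have htr_neg : ∀ x : F, trF q₁ ℓ (-x) = - trF q₁ ℓ x := by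
    intro x
    have h1 : (-x : F) = 0 - x := by ring
    rw [h1, htr_sub, htr_zero]; ring
  have htr_sum : ∀ (S : Finset (Fin m)) (g : Fin m → F),
      trF q₁ ℓ (∑ a ∈ S, g a) = ∑ a ∈ S, trF q₁ ℓ (g a) := by
    intro S g
    induction S using Finset.induction with
    | empty => simpa using htr_zero
    | @insert _ _ hnotmem ih =>
        rw [Finset.sum_insert hnotmem, Finset.sum_insert hnotmem, htr_add, ih]
  have hq₁τ : q₁ ^ (ℓ - 1) * τ ≤ m₂ := by
    rw [hℓ] at hm₂
    have h2 : q₁ ^ ℓ = q₁ ^ (ℓ - 1) * q₁ := by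
      rw [← pow_succ]; congr 1; omega
    have h3 : q₁ ^ (ℓ - 1) * τ * q₁ ≤ m₂ * q₁ := by
      calc q₁ ^ (ℓ - 1) * τ * q₁ = q₁ ^ ℓ * τ := by rw [h2]; ring
        _ ≤ m₂ * q₁ := hm₂
    exact Nat.le_of_mul_le_mul_right h3 (by omega)
  have hm1 : 1 ≤ m := by omega
  have hLq : L ≤ Fintype.card F := by
    have := Fintype.card_le_of_injective _ (hβinj ⟨0, by omega⟩)
    simpa using this
  set sfun : Fin τ → ℕ := fun t => (E t).card - (δ - 1) with hsfun
  have hcardE : ∀ t, (E t).card ≤ L := fun t =>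
    le_trans (Finset.card_le_univ _) (by simp)
  have hMsum : M = ∑ t : Fin τ, sfun t := by
    have h2 : (∑ t : Fin τ, (E t).card) = (∑ t : Fin τ, sfun t) + τ * (δ - 1) := by
      have h1 : ∀ t ∈ Finset.univ, (E t).card = sfun t + (δ - 1) := by
        intro t _
        have := hE t
        have hsb : sfun t = (E t).card - (δ - 1) := rfl
        omega
      rw [Finset.sum_congr rfl h1, Finset.sum_add_distrib, Finset.sum_const,
        Finset.card_univ, Fintype.card_fin, smul_eq_mul]
    omega
  have hcardsig : Fintype.card ((t : Fin τ) × Fin (sfun t)) = Fintype.card (Fin M) := by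
    rw [Fintype.card_sigma, Fintype.card_fin]
    simp [hMsum]
  set κ : Fin M ≃ (t : Fin τ) × Fin (sfun t) :=
    (Fintype.equivOfCardEq hcardsig).symm with hκ
  -- survivor point sets and fresh evaluation points
  set Bset : Fin τ → Finset F := fun t => (Finset.univ \ E t).image (β (idx t)) with hBset
  have hBcard : ∀ t, (Bset t).card = L - (E t).card := by
    intro t
    rw [hBset]
    rw [Finset.card_image_of_injective _ (hβinj _),
      Finset.card_sdiff_of_subset (Finset.subset_univ _)]
    simp
  have hzex : ∀ t : Fin τ, ∃ T : Finset F, T ⊆ Finset.univ \ Bset t ∧ T.card = sfun t := by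
    intro t
    apply Finset.exists_subset_card_eq
    rw [Finset.card_sdiff_of_subset (Finset.subset_univ _), Finset.card_univ, hBcard]
    have h1 := hE t
    have h2 := hcardE t
    have h3 := hLq
    have hsb : sfun t = (E t).card - (δ - 1) := rfl
    omega
  choose Tset hTsub hTcard using hzex
  set z : (t : Fin τ) → Fin (sfun t) → F :=
    fun t k => ((Tset t).equivFin.symm ⟨k.1, by rw [hTcard t]; exact k.2⟩ : F) with hz
  have hzmem : ∀ t k, z t k ∈ Tset t := fun t k =>
    ((Tset t).equivFin.symm ⟨k.1, by rw [hTcard t]; exact k.2⟩).2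
  have hznotB : ∀ t k, z t k ∉ Bset t := fun t k =>
    (Finset.mem_sdiff.1 (hTsub t (hzmem t k))).2
  -- weights and auxiliary polynomials
  set W : Fin m → F := fun j => ∏ j' ∈ Finset.univ.erase j, (y j - y j') with hW
  have hWne : ∀ j, W j ≠ 0 := by
    intro j
    rw [hW]
    refine Finset.prod_ne_zero_iff.2 fun j' hj' => ?_
    exact sub_ne_zero.2 fun hh => (Finset.mem_erase.1 hj').1 (hy hh).symm
  set upoly : Fin τ → F[X] :=
    fun t => ∏ t' ∈ Finset.univ.erase t, (X - C (y (idx t'))) with hupoly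
  set cc : Fin τ → Fin m → F :=
    fun t j => (W j)⁻¹ * (upoly t).eval (y j) * (y j - y (idx t))⁻¹ with hcc
  set Rhat : Fin m → (Fin L → F) → F[X] :=
    fun j col => (Lagrange.interpolate Finset.univ (β j)) col with hRhatdef
  set msgf : (j : Fin m) → (Fin L → F) → ((t : Fin τ) × Fin (sfun t)) → F :=
    fun j col tk => trF q₁ ℓ (cc tk.1 j * (Rhat j col).eval (z tk.1 tk.2)) with hmsgf
  set φ : (j : {j : Fin m // j ∉ Set.range idx}) → (Fin L → F) → (Fin M → ↥K₁) :=
    fun j col k => ⟨msgf j.1 col (κ k), htr_mem _⟩ with hφ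
  refine ⟨φ, ?_⟩

  have hzinj : ∀ t, Function.Injective (z t) := by
    intro t a b hab
    have h1 : ((Tset t).equivFin.symm ⟨a.1, by rw [hTcard t]; exact a.2⟩)
        = ((Tset t).equivFin.symm ⟨b.1, by rw [hTcard t]; exact b.2⟩) := Subtype.ext hab
    have h2 := (Tset t).equivFin.symm.injective h1
    rw [Fin.mk.injEq] at h2
    exact Fin.ext h2
  have hzsurj : ∀ (t : Fin τ) (x : F), x ∈ Tset t → ∃ k, z t k = x := by
    intro t x hx
    have hlt : ((Tset t).equivFin ⟨x, hx⟩).1 < sfun t := by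
      have h1 := ((Tset t).equivFin ⟨x, hx⟩).2
      have h2 := hTcard t
      omega
    refine ⟨⟨((Tset t).equivFin ⟨x, hx⟩).1, hlt⟩, ?_⟩
    have h4 : z t ⟨((Tset t).equivFin ⟨x, hx⟩).1, hlt⟩
        = (((Tset t).equivFin.symm ((Tset t).equivFin ⟨x, hx⟩) : ↥(Tset t)) : F) :=
      congrArg (fun w : Fin (Tset t).card => (((Tset t).equivFin.symm w : ↥(Tset t)) : F))
        (Fin.ext rfl)
    rw [Equiv.symm_apply_apply] at h4
    exact h4
  -- the separation lemma
  have hsep : ∀ A A' : Fin m → Fin L → F,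
      A ∈ TBArrayCode m m₁ L r y h β → A' ∈ TBArrayCode m m₁ L r y h β →
      (∀ j : {j : Fin m // j ∉ Set.range idx}, φ j (A j.1) = φ j (A' j.1)) →
      ((fun (t : Fin τ) (p : {p : Fin L // p ∉ E t}) => A (idx t) p.1)
        = fun t p => A' (idx t) p.1) →
      ∀ (t : Fin τ) (p : Fin L), p ∈ E t → A (idx t) p = A' (idx t) p := by
    intro A A' hA hA' hmsgeq hsureq t p hpE
    obtain ⟨G, hGdeg, hGmod, hAeq⟩ := hA
    obtain ⟨G', hG'deg, hG'mod, hA'eq⟩ := hA'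
    obtain ⟨f, hfdeg, hGf⟩ :=
      tb_decomp hm₁ (by omega) hr hrL hL1 y hy h hdeg G hGdeg hGmod
    obtain ⟨f', hf'deg, hG'f⟩ :=
      tb_decomp hm₁ (by omega) hr hrL hL1 y hy h hdeg G' hG'deg hG'mod
    have hτ1 : 1 ≤ τ := t.pos
    -- column residue polynomials
    set Rc : (Fin r → F[X]) → Fin m → F[X] :=
      fun ff j => ∑ a : Fin r, C ((ff a).eval (y j)) * X ^ (a : ℕ) with hRc
    have hevalRc : ∀ ff (j : Fin m) (x : F),
        (Rc ff j).eval x = ∑ a : Fin r, (ff a).eval (y j) * x ^ (a : ℕ) := by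
      intro ff j x
      rw [hRc, Polynomial.eval_finset_sum]
      exact Finset.sum_congr rfl fun a _ => by
        rw [Polynomial.eval_mul, Polynomial.eval_C, Polynomial.eval_pow, Polynomial.eval_X]
    have hRcdeg : ∀ ff (j : Fin m), (Rc ff j).natDegree ≤ r - 1 := by
      intro ff j
      rw [hRc]
      apply Polynomial.natDegree_sum_le_of_forall_le
      intro a _
      refine le_trans (Polynomial.natDegree_C_mul_le _ _) ?_
      rw [Polynomial.natDegree_X_pow]
      omega
    have hGeval : ∀ (GG : F[X]) (ff : Fin r → F[X]),
        GG = (∑ a : Fin r, (ff a).comp h * X ^ (a : ℕ)) →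
        ∀ (j : Fin m) (pp : Fin L), GG.eval (β j pp) = (Rc ff j).eval (β j pp) := by
      intro GG ff hGG j pp
      rw [hGG, Polynomial.eval_finset_sum, hevalRc]
      refine Finset.sum_congr rfl fun a _ => ?_
      rw [Polynomial.eval_mul, Polynomial.eval_comp, Polynomial.eval_pow,
        Polynomial.eval_X, hβroot j pp]
    have hARc : ∀ (j : Fin m) (pp : Fin L), A j pp = (Rc f j).eval (β j pp) := by
      intro j pp
      rw [hAeq]
      exact hGeval G f hGf j pp
    have hA'Rc : ∀ (j : Fin m) (pp : Fin L), A' j pp = (Rc f' j).eval (β j pp) := by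
      intro j pp
      rw [hA'eq]
      exact hGeval G' f' hG'f j pp
    have hRhatRc : ∀ (ff : Fin r → F[X]) (AA : Fin m → Fin L → F),
        (∀ (j : Fin m) (pp : Fin L), AA j pp = (Rc ff j).eval (β j pp)) →
        ∀ j : Fin m, Rhat j (AA j) = Rc ff j := by
      intro ff AA hAAev j
      apply poly_eq_on_finset (Finset.univ.image (β j))
      · rw [Finset.card_image_of_injective _ (hβinj j), Finset.card_univ, Fintype.card_fin]
        have hd1 := Lagrange.degree_interpolate_lt (s := Finset.univ) (v := β j)
          (AA j) (hβinj j).injOn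
        rw [Finset.card_univ, Fintype.card_fin] at hd1
        rcases eq_or_ne (Rhat j (AA j)) 0 with h0 | h0
        · rw [h0]; simpa using (show 0 < L by omega)
        · exact (Polynomial.natDegree_lt_iff_degree_lt h0).2 (by exact_mod_cast hd1)
      · rw [Finset.card_image_of_injective _ (hβinj j), Finset.card_univ, Fintype.card_fin]
        have := hRcdeg ff j
        omega
      · intro x hx
        obtain ⟨pp, _, rfl⟩ := Finset.mem_image.1 hx
        rw [hRhatdef]
        rw [Lagrange.eval_interpolate_at_node _ (hβinj j).injOn (Finset.mem_univ pp)]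
        exact hAAev j pp
    have hRhatA : ∀ j : Fin m, Rhat j (A j) = Rc f j := hRhatRc f A hARc
    have hRhatA' : ∀ j : Fin m, Rhat j (A' j) = Rc f' j := hRhatRc f' A' hA'Rc
    -- the Fz polynomials
    set Fzp : (Fin r → F[X]) → F → F[X] :=
      fun ff zz => ∑ a : Fin r, C (zz ^ (a : ℕ)) * ff a with hFzp
    have hFzdeg : ∀ (ff : Fin r → F[X]), (∀ a, (ff a).natDegree ≤ m₁ - 1) →
        ∀ zz : F, (Fzp ff zz).natDegree ≤ m₁ - 1 := by
      intro ff hff zz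
      rw [hFzp]
      apply Polynomial.natDegree_sum_le_of_forall_le
      intro a _
      exact le_trans (Polynomial.natDegree_C_mul_le _ _) (hff a)
    have hFzev : ∀ (ff : Fin r → F[X]) (zz : F) (j : Fin m),
        (Fzp ff zz).eval (y j) = (Rc ff j).eval zz := by
      intro ff zz j
      rw [hFzp, Polynomial.eval_finset_sum, hevalRc]
      refine Finset.sum_congr rfl fun a _ => ?_
      rw [Polynomial.eval_mul, Polynomial.eval_C, mul_comm]
    -- the main trace identity
    have hmain : ∀ Fw : F[X], Fw.natDegree ≤ m₁ - 1 → ∀ γ : F,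
        trF q₁ ℓ (γ * ((upoly t).eval (y (idx t)) * (W (idx t))⁻¹ * Fw.eval (y (idx t))))
          = - ∑ j ∈ Finset.univ \ Finset.image idx Finset.univ,
              trF q₁ ℓ (γ * (y j - y (idx t))) * trF q₁ ℓ (cc t j * Fw.eval (y j)) := by
      intro Fw hFwdeg γ
      set qp : F[X] :=
        ∑ i ∈ Finset.range ℓ, C (γ ^ q₁ ^ i) * (X - C (y (idx t))) ^ (q₁ ^ i - 1) with hqp
      have hqpdeg : qp.natDegree ≤ q₁ ^ (ℓ - 1) - 1 := by
        rw [hqp]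
        apply Polynomial.natDegree_sum_le_of_forall_le
        intro i hi
        refine le_trans (Polynomial.natDegree_C_mul_le _ _) ?_
        rw [Polynomial.natDegree_pow, Polynomial.natDegree_X_sub_C, mul_one]
        have h5 : q₁ ^ i ≤ q₁ ^ (ℓ - 1) :=
          Nat.pow_le_pow_right (by omega) (by have := Finset.mem_range.1 hi; omega)
        omega
      have hudeg : (upoly t).natDegree ≤ τ - 1 := by
        rw [hupoly]
        refine le_trans (Polynomial.natDegree_prod_le _ _) ?_
        calc ∑ t' ∈ Finset.univ.erase t, ((X : F[X]) - C (y (idx t'))).natDegree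
            ≤ ∑ _t' ∈ Finset.univ.erase t, 1 :=
              Finset.sum_le_sum fun t' _ => le_of_eq (Polynomial.natDegree_X_sub_C _)
          _ = τ - 1 := by
              rw [Finset.sum_const, smul_eq_mul, mul_one, Finset.card_erase_of_mem
                (Finset.mem_univ t), Finset.card_univ, Fintype.card_fin]
      set v : F[X] := qp * upoly t * Fw with hv
      have hvdeg : v.natDegree + 2 ≤ m := by
        have h1 := Polynomial.natDegree_mul_le (p := qp * upoly t) (q := Fw)
        have h2 := Polynomial.natDegree_mul_le (p := qp) (q := upoly t)
        have h3 : 1 ≤ q₁ ^ (ℓ - 1) := Nat.one_le_pow _ _ (by omega)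
        have h4 : q₁ ^ (ℓ - 1) + τ - 1 ≤ q₁ ^ (ℓ - 1) * τ := by
          obtain ⟨a', ha'⟩ : ∃ a', q₁ ^ (ℓ - 1) = a' + 1 := ⟨q₁ ^ (ℓ - 1) - 1, by omega⟩
          obtain ⟨b', hb'⟩ : ∃ b', τ = b' + 1 := ⟨τ - 1, by omega⟩
          have h5 : (a' + 1) * (b' + 1) = a' * b' + a' + b' + 1 := by ring
          rw [ha', hb', h5]
          omega
        rw [← hv] at h1
        omega
      have hdual := dual_sum y hy v hvdeg
      have hsum0 : (∑ j ∈ Finset.univ \ Finset.image idx Finset.univ, v.eval (y j) * (W j)⁻¹)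
          + ∑ j ∈ Finset.image idx Finset.univ, v.eval (y j) * (W j)⁻¹ = 0 := by
        rw [Finset.sum_sdiff (Finset.subset_univ _)]
        exact hdual
      have hqpstar : qp.eval (y (idx t)) = γ := by
        rw [hqp, Polynomial.eval_finset_sum]
        rw [Finset.sum_eq_single_of_mem 0 (Finset.mem_range.2 (by omega))]
        · simp
        · intro i _ hi0
          have h5 : ((X : F[X]) - C (y (idx t))).eval (y (idx t)) = 0 := by simp
          rw [Polynomial.eval_mul, Polynomial.eval_pow, h5, zero_pow, mul_zero]
          have h6 : 2 ≤ q₁ ^ i := le_trans hq₁2 (Nat.le_self_pow hi0 q₁)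
          omega
      have himg : ∑ j ∈ Finset.image idx Finset.univ, v.eval (y j) * (W j)⁻¹
          = γ * ((upoly t).eval (y (idx t))) * Fw.eval (y (idx t)) * (W (idx t))⁻¹ := by
        rw [Finset.sum_image (fun a _ b _ hab => hidx.injective hab)]
        rw [Finset.sum_eq_single_of_mem t (Finset.mem_univ t)]
        · rw [hv, Polynomial.eval_mul, Polynomial.eval_mul, hqpstar]
          all_goals ring
        · intro t' _ ht'
          have h6 : (upoly t).eval (y (idx t')) = 0 := by
            rw [hupoly, Polynomial.eval_prod]
            apply Finset.prod_eq_zero (Finset.mem_erase.2 ⟨ht', Finset.mem_univ _⟩)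
            simp
          simp only [hv, Polynomial.eval_mul, h6, mul_zero, zero_mul]
      have hynej : ∀ j, j ∈ Finset.univ \ Finset.image idx Finset.univ → y j - y (idx t) ≠ 0 := by
        intro j hj
        refine sub_ne_zero.2 fun hh => ?_
        have h7 := hy hh
        rw [Finset.mem_sdiff] at hj
        exact hj.2 (h7 ▸ Finset.mem_image.2 ⟨t, Finset.mem_univ t, rfl⟩)
      have hqpj : ∀ j, (y j - y (idx t)) * qp.eval (y j) = trF q₁ ℓ (γ * (y j - y (idx t))) := by
        intro j
        rw [hqp, Polynomial.eval_finset_sum, Finset.mul_sum]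
        unfold trF
        refine Finset.sum_congr rfl fun i _ => ?_
        rw [Polynomial.eval_mul, Polynomial.eval_C, Polynomial.eval_pow,
          Polynomial.eval_sub, Polynomial.eval_X, Polynomial.eval_C]
        have h8 : 1 ≤ q₁ ^ i := Nat.one_le_pow _ _ (by omega)
        have hpw : (y j - y (idx t)) * (y j - y (idx t)) ^ (q₁ ^ i - 1)
            = (y j - y (idx t)) ^ q₁ ^ i := by
          conv_rhs => rw [show q₁ ^ i = 1 + (q₁ ^ i - 1) by omega]
          rw [pow_add, pow_one]
        rw [mul_pow, ← hpw]
        ring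
      have hterm : ∀ j, j ∈ Finset.univ \ Finset.image idx Finset.univ →
          v.eval (y j) * (W j)⁻¹
            = trF q₁ ℓ (γ * (y j - y (idx t))) * (cc t j * Fw.eval (y j)) := by
        intro j hj
        rw [← hqpj j, hv, Polynomial.eval_mul, Polynomial.eval_mul, hcc]
        have h9 := hynej j hj
        have h10 := hWne j
        field_simp
      have hLHS : γ * ((upoly t).eval (y (idx t)) * (W (idx t))⁻¹ * Fw.eval (y (idx t)))
          = - ∑ j ∈ Finset.univ \ Finset.image idx Finset.univ, v.eval (y j) * (W j)⁻¹ := by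
        rw [himg] at hsum0
        linear_combination hsum0
      rw [hLHS, htr_neg, htr_sum]
      congr 1
      refine Finset.sum_congr rfl fun j hj => ?_
      rw [hterm j hj]
      exact htr_smul _ _ (htr_mem _)
    -- message equality transported to the residues
    have hmsg2 : ∀ (j : Fin m), j ∉ Set.range idx → ∀ k : Fin (sfun t),
        trF q₁ ℓ (cc t j * (Rc f j).eval (z t k))
          = trF q₁ ℓ (cc t j * (Rc f' j).eval (z t k)) := by
      intro j hj k
      have h1 := hmsgeq ⟨j, hj⟩
      have h2 := congrFun h1 (κ.symm ⟨t, k⟩)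
      have h3 := congrArg Subtype.val h2
      simp only [hφ, Equiv.apply_symm_apply] at h3
      rw [hmsgf] at h3
      simp only [Equiv.apply_symm_apply] at h3
      rw [hRhatA, hRhatA'] at h3
      exact h3
    -- recovered values agree
    have hkey : ∀ k : Fin (sfun t),
        (Rc f (idx t)).eval (z t k) = (Rc f' (idx t)).eval (z t k) := by
      intro k
      have hγeq : ∀ γ : F,
          trF q₁ ℓ (γ * ((upoly t).eval (y (idx t)) * (W (idx t))⁻¹
              * (Fzp f (z t k)).eval (y (idx t))))
            = trF q₁ ℓ (γ * ((upoly t).eval (y (idx t)) * (W (idx t))⁻¹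
              * (Fzp f' (z t k)).eval (y (idx t)))) := by
        intro γ
        rw [hmain (Fzp f (z t k)) (hFzdeg f hfdeg (z t k)) γ,
          hmain (Fzp f' (z t k)) (hFzdeg f' hf'deg (z t k)) γ]
        congr 1
        refine Finset.sum_congr rfl fun j hj => ?_
        congr 1
        have hjnr : j ∉ Set.range idx := by
          rw [Finset.mem_sdiff] at hj
          intro hcon
          obtain ⟨t', rfl⟩ := hcon
          exact hj.2 (Finset.mem_image.2 ⟨t', Finset.mem_univ t', rfl⟩)
        rw [hFzev f (z t k) j, hFzev f' (z t k) j]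
        exact hmsg2 j hjnr k
      set D : F := (upoly t).eval (y (idx t)) * (W (idx t))⁻¹ with hD
      have hDne : D ≠ 0 := by
        rw [hD]
        apply mul_ne_zero
        · rw [hupoly, Polynomial.eval_prod]
          refine Finset.prod_ne_zero_iff.2 fun t' ht' => ?_
          simp only [Polynomial.eval_sub, Polynomial.eval_X, Polynomial.eval_C]
          refine sub_ne_zero.2 fun hh => ?_
          exact (Finset.mem_erase.1 ht').1 (hidx.injective (hy hh)).symm
        · exact inv_ne_zero (hWne _)
      have hstar : (Fzp f (z t k)).eval (y (idx t)) = (Fzp f' (z t k)).eval (y (idx t)) := by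
        by_contra hne
        obtain ⟨s0, hs0⟩ := htr_ne
        set ξ : F := D * (Fzp f (z t k)).eval (y (idx t))
            - D * (Fzp f' (z t k)).eval (y (idx t)) with hξ
        have hξne : ξ ≠ 0 := by
          rw [hξ]
          intro h0
          exact hne (mul_left_cancel₀ hDne (by linear_combination h0))
        have h11 := hγeq (s0 * ξ⁻¹)
        have h12 : s0 * ξ⁻¹ * (D * (Fzp f (z t k)).eval (y (idx t)))
            - s0 * ξ⁻¹ * (D * (Fzp f' (z t k)).eval (y (idx t))) = s0 := by
          rw [hξ] at *
          field_simp
        have h13 : trF q₁ ℓ (s0 * ξ⁻¹ * (D * (Fzp f (z t k)).eval (y (idx t)))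
            - s0 * ξ⁻¹ * (D * (Fzp f' (z t k)).eval (y (idx t)))) = 0 := by
          rw [htr_sub]
          have e1 : s0 * ξ⁻¹ * (D * (Fzp f (z t k)).eval (y (idx t)))
              = s0 * ξ⁻¹ * ((upoly t).eval (y (idx t)) * (W (idx t))⁻¹
                * (Fzp f (z t k)).eval (y (idx t))) := by rw [hD]
          have e2 : s0 * ξ⁻¹ * (D * (Fzp f' (z t k)).eval (y (idx t)))
              = s0 * ξ⁻¹ * ((upoly t).eval (y (idx t)) * (W (idx t))⁻¹
                * (Fzp f' (z t k)).eval (y (idx t))) := by rw [hD]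
          rw [e1, e2, h11]
          ring
        rw [h12] at h13
        exact hs0 h13
      rw [← hFzev f (z t k) (idx t), ← hFzev f' (z t k) (idx t)]
      exact hstar
    -- combine survivors and recovered values
    have hRR : Rc f (idx t) = Rc f' (idx t) := by
      apply poly_eq_on_finset (Bset t ∪ Tset t)
      · have hdisj : Disjoint (Bset t) (Tset t) := by
          rw [Finset.disjoint_right]
          intro x hxT hxB
          exact (Finset.mem_sdiff.1 (hTsub t hxT)).2 hxB
        rw [Finset.card_union_of_disjoint hdisj, hBcard, hTcard]
        have h1 := hE t
        have h2 := hcardE t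
        have hsb : sfun t = (E t).card - (δ - 1) := rfl
        have h3 := hRcdeg f (idx t)
        omega
      · have hdisj : Disjoint (Bset t) (Tset t) := by
          rw [Finset.disjoint_right]
          intro x hxT hxB
          exact (Finset.mem_sdiff.1 (hTsub t hxT)).2 hxB
        rw [Finset.card_union_of_disjoint hdisj, hBcard, hTcard]
        have h1 := hE t
        have h2 := hcardE t
        have hsb : sfun t = (E t).card - (δ - 1) := rfl
        have h3 := hRcdeg f' (idx t)
        omega
      · intro x hx
        rcases Finset.mem_union.1 hx with hxB | hxT
        · obtain ⟨pp, hpp, rfl⟩ := Finset.mem_image.1 hxB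
          have hppE : pp ∉ E t := (Finset.mem_sdiff.1 hpp).2
          rw [← hARc (idx t) pp, ← hA'Rc (idx t) pp]
          have h4 := congrFun (congrFun hsureq t) ⟨pp, hppE⟩
          exact h4
        · obtain ⟨k, rfl⟩ := hzsurj t x hxT
          exact hkey k
    rw [hARc (idx t) p, hA'Rc (idx t) p, hRR]
  -- define the reconstruction function via choice
  refine ⟨fun msgs survs =>
    if hex : ∃ A, A ∈ TBArrayCode m m₁ L r y h β ∧
        (fun j : {j : Fin m // j ∉ Set.range idx} => φ j (A j.1)) = msgs ∧
        (fun (t : Fin τ) (p : {p : Fin L // p ∉ E t}) => A (idx t) p.1) = survs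
    then fun t pp => hex.choose (idx t) pp.1
    else fun t pp => 0, ?_⟩
  intro A hA
  have hex : ∃ A', A' ∈ TBArrayCode m m₁ L r y h β ∧
      (fun j : {j : Fin m // j ∉ Set.range idx} => φ j (A' j.1))
        = (fun j : {j : Fin m // j ∉ Set.range idx} => φ j (A j.1)) ∧
      (fun (t : Fin τ) (p : {p : Fin L // p ∉ E t}) => A' (idx t) p.1)
        = (fun (t : Fin τ) (p : {p : Fin L // p ∉ E t}) => A (idx t) p.1) :=
    ⟨A, hA, rfl, rfl⟩
  show _ = if hex' : _ then _ else _
  rw [dif_pos hex]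
  funext t pp
  obtain ⟨hc1, hc2, hc3⟩ := hex.choose_spec
  exact (hsep hex.choose A hc1 hA (fun j => congrFun hc2 j) hc3 t pp.1 pp.2).symm
end

section
/- Let 𝔽_{q₁} be a degree-ℓ field extension of 𝔽_q (so q₁ = q^ℓ), let y₁, …, y_m ∈ 𝔽_{q₁} be distinct with m = m₁ + m₂ (m₁ ≥ 1, m₂ ≥ 0), and let C₁ = {(f(y₁), …, f(y_m)) : f ∈ 𝔽_{q₁}[x], deg f < m₁} be the [m, m₁] Reed–Solomon code over 𝔽_{q₁}. Let 1 ≤ τ ≤ m₂ and m₁ < D ≤ m − τ, and suppose C₁ has the (τ, D)-optimal-repair property over 𝔽_q: for every τ-subset I ⊆ [m] and every D-subset R ⊆ [m]∖I there exist natural numbers (a_j)_{j∈R} with Σ_{j∈R} a_j = τ·D·ℓ/(D − m₁ + τ), functions ψ_j : 𝔽_{q₁} → 𝔽_q^{a_j}, and a decoder recovering (c_j)_{j∈I} from (ψ_j(c_j))_{j∈R} for every c ∈ C₁. Let 𝒜 be the array-form Tamo–Barg code over 𝔽_{q₁} built from y₁, …, y_m (with parameters r ≥ 1, δ ≥ 2,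 L = r + δ − 1). Then for every τ-subset I ⊆ [m], every family of erasure sets E_i ⊆ [L] with |E_i| = w and δ ≤ w ≤ L for i ∈ I, and every D-subset R ⊆ [m]∖I, there exist natural numbers (b_j)_{j∈R} with Σ_{j∈R} b_j = τ·D·ℓ·(w − δ + 1)/(D − m₁ + τ), functions φ_j : 𝔽_{q₁}^L → 𝔽_q^{b_j}, and a function Φ recovering, for every codeword of 𝒜, all erased entries ((A_i)|_{E_i})_{i∈I} from the messages (φ_j(A_j))_{j∈R} together with the surviving entries ((A_i)|_{[L]∖E_i})_{i∈I}. -/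
open Polynomial

lemma tb_digits_exist {F : Type*} [Field F] (h₀ : F[X]) (hmon : h₀.Monic)
    (hL : 0 < h₀.natDegree) (m₁ : ℕ) (G : F[X])
    (hG : G.degree < ((m₁ * h₀.natDegree : ℕ) : WithBot ℕ)) :
    ∃ d : ℕ → F[X], (∀ k, (d k).degree < (h₀.natDegree : WithBot ℕ)) ∧
      G = ∑ k ∈ Finset.range m₁, d k * h₀ ^ k := by
  set L := h₀.natDegree with hLdef
  let Q : ℕ → F[X] := fun k => Nat.rec G (fun _ q => q /ₘ h₀) k
  have hQsucc : ∀ k, Q (k + 1) = Q k /ₘ h₀ := fun k => rfl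
  let d : ℕ → F[X] := fun k => Q k %ₘ h₀
  have hd : ∀ k, (d k).degree < (L : WithBot ℕ) := by
    intro k
    have := degree_modByMonic_lt (Q k) hmon
    rwa [degree_eq_natDegree hmon.ne_zero] at this
  have hstep : ∀ k, Q k = d k + h₀ * Q (k + 1) := by
    intro k
    rw [hQsucc]
    exact (modByMonic_add_div (Q k) h₀).symm
  have hA : ∀ K : ℕ, G = (∑ k ∈ Finset.range K, d k * h₀ ^ k) + Q K * h₀ ^ K := by
    intro K
    induction K with
    | zero => simp [Q]
    | succ n ih =>
      rw [Finset.sum_range_succ, ih]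
      have := hstep n
      rw [this]
      ring
  have hB : ∀ k, (Q k).degree < (((m₁ - k) * L : ℕ) : WithBot ℕ) := by
    intro k
    induction k with
    | zero => simp only [Nat.sub_zero]; exact hG
    | succ n ih =>
      rw [hQsucc]
      rcases eq_or_ne (Q n) 0 with hz | hz
      · rw [hz, zero_divByMonic, degree_zero]
        exact WithBot.bot_lt_coe _
      by_cases hdlt : (Q n).degree < h₀.degree
      · rw [(divByMonic_eq_zero_iff hmon).2 hdlt, degree_zero]
        exact WithBot.bot_lt_coe _
      rcases eq_or_ne (Q n /ₘ h₀) 0 with hz2 | hz2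
      · rw [hz2, degree_zero]; exact WithBot.bot_lt_coe _
      rw [degree_eq_natDegree hz2, Nat.cast_lt, natDegree_divByMonic _ hmon]
      rw [degree_eq_natDegree hz, Nat.cast_lt] at ih
      push_neg at hdlt
      rw [degree_eq_natDegree hmon.ne_zero, degree_eq_natDegree hz, Nat.cast_le] at hdlt
      -- natDegree (Q n) - L < (m₁ - (n+1)) * L, with L ≤ natDegree Q n < (m₁ - n) * L
      have h1 : 1 ≤ m₁ - n := by
        rcases Nat.eq_zero_or_pos (m₁ - n) with hc | hc
        · rw [hc, zero_mul] at ih; omega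
        · omega
      have : (m₁ - (n + 1)) * L = (m₁ - n) * L - L := by
        have : m₁ - (n+1) = (m₁ - n) - 1 := by omega
        rw [this, Nat.sub_mul, one_mul]
      rw [this]
      omega
  have hQz : Q m₁ = 0 := by
    have := hB m₁
    simp only [Nat.sub_self, Nat.zero_mul, Nat.cast_zero] at this
    rw [Nat.WithBot.lt_zero_iff, degree_eq_bot] at this
    exact this
  refine ⟨d, hd, ?_⟩
  rw [hA m₁, hQz, zero_mul, add_zero]

lemma tb_sum_modByMonic {F : Type*} [Field F] (h₀ : F[X]) (hmon : h₀.Monic)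
    (hL : 0 < h₀.natDegree) (m₁ : ℕ) (d : ℕ → F[X])
    (hd : ∀ k, (d k).degree < (h₀.natDegree : WithBot ℕ)) (z : F) :
    (∑ k ∈ Finset.range m₁, d k * h₀ ^ k) %ₘ (h₀ - C z) =
      ∑ k ∈ Finset.range m₁, z ^ k • d k := by
  have hCz : (C z).degree < h₀.degree := by
    refine lt_of_le_of_lt degree_C_le ?_
    rw [degree_eq_natDegree hmon.ne_zero]
    exact_mod_cast hL
  have hqdeg : (h₀ - C z).degree = h₀.degree := degree_sub_eq_left_of_degree_lt hCz
  have hqmon : (h₀ - C z).Monic := by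
    unfold Monic leadingCoeff
    rw [natDegree_eq_of_degree_eq_some (by rw [hqdeg, degree_eq_natDegree hmon.ne_zero])]
    rw [coeff_sub, coeff_C, if_neg (Nat.pos_iff_ne_zero.mp hL), sub_zero]
    exact hmon
  have hdvd : (h₀ - C z) ∣ (∑ k ∈ Finset.range m₁, d k * h₀ ^ k) -
      ∑ k ∈ Finset.range m₁, z ^ k • d k := by
    rw [← Finset.sum_sub_distrib]
    apply Finset.dvd_sum
    intro k _
    have : d k * h₀ ^ k - z ^ k • d k = d k * (h₀ ^ k - (C z) ^ k) := by
      rw [smul_eq_C_mul, C_pow]; ring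
    rw [this]
    exact Dvd.dvd.mul_left (sub_dvd_pow_sub_pow h₀ (C z) k) _
  rw [modByMonic_eq_of_dvd_sub hqmon hdvd]
  rw [(modByMonic_eq_self_iff hqmon).2]
  rw [hqdeg, degree_eq_natDegree hmon.ne_zero]
  refine lt_of_le_of_lt (degree_sum_le _ _) ?_
  rw [Finset.sup_lt_iff (WithBot.bot_lt_coe _)]
  intro k _
  exact lt_of_le_of_lt (degree_smul_le _ _) (hd k)

/-- Lemma 5 of the paper. If the `[m, m₁]` Reed–Solomon code `C₁` over
`𝔽_{q₁}` (a degree-`ℓ` extension of `𝔽_q`, realized as the subfield `K` of `F = 𝔽_{q₁}`)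
has the `(τ, D)`-optimal-repair property (total download `τ·D·ℓ/(D - m₁ + τ)` symbols of
`𝔽_q`; stated multiplicatively to avoid division), then for the array-form Tamo–Barg code
over `𝔽_{q₁}`, any `τ` columns each suffering `w` erasures (`δ ≤ w ≤ L`) can be repaired
from any `D` other columns with total download `τ·D·ℓ·(w - δ + 1)/(D - m₁ + τ)` symbols
of `𝔽_q`, using in addition the surviving entries of the erased columns. -/
theorem tamo_barg_partial_repair_from_RS_optimal_repair
    (F : Type*) [Field F] [Fintype F]
    (K : Subfield F) (ℓ : ℕ) (hℓ : Nat.card F = Nat.card K ^ ℓ)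
    (m m₁ m₂ r δ L : ℕ)
    (hm : m = m₁ + m₂) (hm₁ : 1 ≤ m₁) (hr : 1 ≤ r) (hδ : 2 ≤ δ) (hL : L + 1 = r + δ)
    (y : Fin m → F) (hy : Function.Injective y)
    (τ D : ℕ) (hτ1 : 1 ≤ τ) (hτm₂ : τ ≤ m₂) (hm₁D : m₁ < D) (hDm : D + τ ≤ m)
    -- the `(τ, D)`-optimal-repair property of `C₁ = {(f(y₁), …, f(y_m)) : deg f < m₁}`:
    (hopt : ∀ I : Finset (Fin m), I.card = τ → ∀ R : Finset (Fin m), R.card = D →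
      Disjoint I R →
      ∃ a : Fin m → ℕ,
        (∑ j ∈ R, a j) * (D - m₁ + τ) = τ * D * ℓ ∧
        ∃ ψ : (j : Fin m) → F → (Fin (a j) → ↥K),
        ∃ dec : ((j : ↥R) → (Fin (a (j : Fin m)) → ↥K)) → (↥I → F),
          ∀ c : Fin m → F, (∃ f : F[X], f.degree < ((m₁ : ℕ) : WithBot ℕ) ∧
              c = fun j => f.eval (y j)) →
            (fun i : ↥I => c i.1) = dec (fun j => ψ (j : Fin m) (c j.1)))
    (h : F[X]) (hdeg : h.degree = ((L : ℕ) : WithBot ℕ))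
    (β : Fin m → Fin L → F)
    (hβinj : ∀ i : Fin m, Function.Injective (β i))
    (hβroot : ∀ (i : Fin m) (j : Fin L), h.eval (β i j) = y i) :
    ∀ I : Finset (Fin m), I.card = τ →
    ∀ (wE : ℕ) (E : Fin m → Finset (Fin L)), (∀ i ∈ I, (E i).card = wE) →
      δ ≤ wE → wE ≤ L →
    ∀ R : Finset (Fin m), R.card = D → Disjoint I R →
      ∃ b : Fin m → ℕ,
        (∑ j ∈ R, b j) * (D - m₁ + τ) = τ * D * ℓ * (wE - δ + 1) ∧
        ∃ φ : (j : Fin m) → (Fin L → F) → (Fin (b j) → ↥K),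
        ∃ Φ : ((j : ↥R) → (Fin (b (j : Fin m)) → ↥K)) →
              ((i : ↥I) → ({p : Fin L // p ∉ E i.1} → F)) →
              ((i : ↥I) → (↥(E i.1) → F)),
          ∀ A ∈ TBArrayCode m m₁ L r y h β,
            (fun (i : ↥I) (p : ↥(E i.1)) => A i.1 p.1) =
              Φ (fun j => φ (j : Fin m) (A j.1)) (fun i p => A i.1 p.1) := by
  intro I hI wE E hE hδw hwL R hR hIR
  obtain ⟨a, ha, ψ, dec, hdec⟩ := hopt I hI R hR hIR
  set W := wE - δ + 1 with hW
  have hW1 : 1 ≤ W := by omega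
  let su : Fin W → ℕ := fun u => (L - wE) + u.val
  have hsu_lt : ∀ u : Fin W, su u < r := by
    intro u
    have := u.isLt
    simp only [su]
    omega
  refine ⟨fun j => W * a j, ?_, ?_⟩
  · rw [← Finset.mul_sum, mul_comm W, mul_assoc, mul_comm W (D - m₁ + τ), ← mul_assoc, ha]
  · -- main construction
    have hLpos : 0 < L := by omega
    have hrL : r < L := by omega
    have hh0 : h ≠ 0 := by
      intro hz
      rw [hz, degree_zero] at hdeg
      exact absurd hdeg.symm (by simp)
    have hlc0 : h.leadingCoeff ≠ 0 := leadingCoeff_ne_zero.mpr hh0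
    set lc := h.leadingCoeff with hlcdef
    set h₀ := h * C lc⁻¹ with hh₀def
    have hmon : h₀.Monic := monic_mul_leadingCoeff_inv hh0
    have hh₀deg : h₀.degree = (L : WithBot ℕ) := by
      rw [hh₀def, degree_mul, degree_C (inv_ne_zero hlc0), hdeg, add_zero]
    have hh₀nat : h₀.natDegree = L := natDegree_eq_of_degree_eq_some hh₀deg
    set φ : (j : Fin m) → (Fin L → F) → Fin (W * a j) → ↥K := fun j v k =>
      ψ j ((Lagrange.interpolate Finset.univ (β j) v).coeff
        (su (finProdFinEquiv.symm k).1)) (finProdFinEquiv.symm k).2 with hφdef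
    refine ⟨φ, fun msgs surv i p =>
      (∑ u : Fin W, dec (fun j t => msgs j (finProdFinEquiv (u, t))) i * (β i.1 p.1) ^ (su u)) +
      (Lagrange.interpolate (E i.1)ᶜ (β i.1)
        (fun q => if hq : q ∉ E i.1 then surv i ⟨q, hq⟩ -
          ∑ u : Fin W, dec (fun j t => msgs j (finProdFinEquiv (u, t))) i * (β i.1 q) ^ (su u)
        else 0)).eval (β i.1 p.1), ?_⟩
    rintro A ⟨G, hGdeg, hGmod, rfl⟩
    -- digits
    obtain ⟨d, hd, hGsum⟩ := tb_digits_exist h₀ hmon (hh₀nat ▸ hLpos) m₁ G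
      (by rw [hh₀nat]; exact hGdeg)
    set z : Fin m → F := fun i => y i * lc⁻¹ with hzdef
    set g : Fin m → F[X] := fun i => G % (h - C (y i)) with hgdef
    have hgmod : ∀ i, g i = G %ₘ (h₀ - C (z i)) := by
      intro i
      have hCy : (C (y i)).degree < h.degree := by
        rw [hdeg]
        exact lt_of_le_of_lt degree_C_le (by exact_mod_cast hLpos)
      have hdsub : (h - C (y i)).degree = (L : WithBot ℕ) := by
        rw [degree_sub_eq_left_of_degree_lt hCy, hdeg]
      have hlcsub : (h - C (y i)).leadingCoeff = lc := by
        rw [leadingCoeff, natDegree_eq_of_degree_eq_some hdsub, coeff_sub, coeff_C,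
          if_neg hLpos.ne', sub_zero, hlcdef, leadingCoeff, natDegree_eq_of_degree_eq_some hdeg]
      show G % (h - C (y i)) = _
      rw [Polynomial.mod_def, hlcsub]
      congr 1
      rw [sub_mul, ← C_mul, ← hh₀def]
    have hgsum : ∀ i, g i = ∑ k ∈ Finset.range m₁, (z i) ^ k • d k := by
      intro i
      rw [hgmod i]
      conv_lhs => rw [hGsum]
      exact tb_sum_modByMonic h₀ hmon (hh₀nat ▸ hLpos) m₁ d hd (z i)
    set f : ℕ → F[X] :=
      fun s => ∑ k ∈ Finset.range m₁, C ((d k).coeff s * (lc⁻¹) ^ k) * X ^ k with hfdef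
    have hfdeg : ∀ s, (f s).degree < ((m₁ : ℕ) : WithBot ℕ) := by
      intro s
      refine lt_of_le_of_lt (degree_sum_le _ _) ?_
      rw [Finset.sup_lt_iff (WithBot.bot_lt_coe _)]
      intro k hk
      refine lt_of_le_of_lt (degree_mul_le _ _) ?_
      rw [degree_X_pow]
      refine lt_of_le_of_lt (add_le_add_left degree_C_le _) ?_
      rw [zero_add]
      exact_mod_cast Finset.mem_range.mp hk
    have hfeval : ∀ s i, (f s).eval (y i) = (g i).coeff s := by
      intro s i
      rw [hgsum i, finset_sum_coeff]
      show eval (y i) (∑ k ∈ Finset.range m₁, C ((d k).coeff s * (lc⁻¹) ^ k) * X ^ k) = _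
      rw [eval_finset_sum]
      refine Finset.sum_congr rfl fun k _ => ?_
      rw [coeff_smul, smul_eq_mul, eval_mul, eval_C, eval_pow, eval_X]
      show (d k).coeff s * lc⁻¹ ^ k * y i ^ k = (y i * lc⁻¹) ^ k * (d k).coeff s
      rw [mul_pow]
      ring
    have hm₁m : m₁ ≤ m := by omega
    have hfzero : ∀ s, r ≤ s → f s = 0 := by
      intro s hs
      set T : Finset (Fin m) := Finset.univ.image (Fin.castLE hm₁m) with hTdef
      have hTcard : T.card = m₁ := by
        rw [hTdef, Finset.card_image_of_injective _ (Fin.castLE_injective hm₁m),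
          Finset.card_univ, Fintype.card_fin]
      have hvals : ∀ t ∈ T, (f s).eval (y t) = 0 := by
        intro t ht
        rw [hTdef, Finset.mem_image] at ht
        obtain ⟨t', _, rfl⟩ := ht
        rw [hfeval]
        refine coeff_eq_zero_of_degree_lt (lt_of_lt_of_le (hGmod _ t'.isLt) ?_)
        exact_mod_cast hs
      have hfi := Lagrange.eq_interpolate (v := y) (s := T) (f := f s)
        (hy.injOn) (by rw [hTcard]; exact hfdeg s)
      rw [hfi, Lagrange.interpolate_apply]
      refine Finset.sum_eq_zero fun t ht => ?_
      rw [hvals t ht, map_zero, zero_mul]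
    have hgdegr : ∀ i, (g i).degree < ((r : ℕ) : WithBot ℕ) := by
      intro i
      rw [degree_lt_iff_coeff_zero]
      intro n hn
      rw [← hfeval n i, hfzero n hn, eval_zero]
    have hAg : ∀ i (p : Fin L), G.eval (β i p) = (g i).eval (β i p) := by
      intro i p
      conv_lhs => rw [← EuclideanDomain.div_add_mod G (h - C (y i))]
      rw [eval_add, eval_mul, eval_sub, eval_C, hβroot, sub_self, zero_mul, zero_add]
    have hcardL : (Finset.univ : Finset (Fin L)).card = L := by simp
    have hginterp : ∀ j,
        Lagrange.interpolate Finset.univ (β j) (fun p => G.eval (β j p)) = g j := by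
      intro j
      symm
      refine Lagrange.eq_interpolate_of_eval_eq _ ((hβinj j).injOn) ?_ ?_
      · rw [hcardL]
        exact lt_trans (hgdegr j) (by exact_mod_cast hrL)
      · intro p _
        exact (hAg j p).symm
    have hcw : ∀ u : Fin W,
        (fun i : ↥I => (f (su u)).eval (y i.1)) =
          dec (fun j => ψ j.1 ((f (su u)).eval (y j.1))) :=
      fun u => hdec (fun j => (f (su u)).eval (y j)) ⟨f (su u), hfdeg _, rfl⟩
    funext i p
    simp only
    have key : ∀ u : Fin W,
        dec (fun (j : ↥R) (t : Fin (a j.1)) =>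
          φ j.1 (fun q => G.eval (β j.1 q)) (finProdFinEquiv (u, t))) i =
        (g i.1).coeff (su u) := by
      intro u
      have h1 : (fun (j : ↥R) (t : Fin (a j.1)) =>
          φ j.1 (fun q => G.eval (β j.1 q)) (finProdFinEquiv (u, t))) =
          fun j : ↥R => ψ j.1 ((f (su u)).eval (y j.1)) := by
        funext j t
        simp only [hφdef, Equiv.symm_apply_apply]
        rw [hginterp j.1, hfeval]
      rw [h1, ← hcw u]
      exact hfeval _ _
    simp only [key]
    have hsu_inj : Function.Injective su := by
      intro u u' huv
      apply Fin.ext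
      simp only [su] at huv
      omega
    set ell : F[X] := g i.1 - ∑ u : Fin W, C ((g i.1).coeff (su u)) * X ^ (su u) with helldef
    have hell_deg : ell.degree < ((L - wE : ℕ) : WithBot ℕ) := by
      rw [helldef, degree_lt_iff_coeff_zero]
      intro n hn
      rw [coeff_sub, finset_sum_coeff]
      simp only [coeff_C_mul, coeff_X_pow]
      by_cases hnr : r ≤ n
      · rw [coeff_eq_zero_of_degree_lt (lt_of_lt_of_le (hgdegr i.1) (by exact_mod_cast hnr)),
          Finset.sum_eq_zero, sub_zero]
        intro u _
        rw [if_neg, mul_zero]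
        intro heq
        have := hsu_lt u
        omega
      · push_neg at hnr
        have hn' : n - (L - wE) < W := by omega
        have hsu₀ : su (⟨n - (L - wE), hn'⟩ : Fin W) = n := by
          simp only [su]
          omega
        rw [Finset.sum_eq_single (⟨n - (L - wE), hn'⟩ : Fin W)]
        · rw [if_pos hsu₀.symm, mul_one, hsu₀, sub_self]
        · intro u _ hu
          rw [if_neg, mul_zero]
          intro heq
          exact hu (hsu_inj (by rw [hsu₀]; exact heq.symm))
        · intro habs
          exact absurd (Finset.mem_univ _) habs
    have hcardc : (E i.1)ᶜ.card = L - wE := by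
      rw [Finset.card_compl, hE i.1 i.2, Fintype.card_fin]
    have hlow : ell = Lagrange.interpolate (E i.1)ᶜ (β i.1) (fun q =>
        if _ : q ∉ E i.1 then G.eval (β i.1 q) -
          ∑ x : Fin W, (g i.1).coeff (su x) * (β i.1 q) ^ (su x) else 0) := by
      refine Lagrange.eq_interpolate_of_eval_eq _ ((hβinj i.1).injOn) ?_ ?_
      · rw [hcardc]
        exact hell_deg
      · intro q hq
        have hq' : q ∉ E i.1 := Finset.mem_compl.mp hq
        rw [dif_pos hq', helldef, eval_sub, eval_finset_sum]
        simp only [eval_mul, eval_C, eval_pow, eval_X]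
        rw [← hAg i.1 q]
    rw [← hlow, hAg i.1 p.1, helldef, eval_sub, eval_finset_sum]
    simp only [eval_mul, eval_C, eval_pow, eval_X]
    ring
end

section
/- Let C be an (N, K, k = Kr; L = r + δ − 1, δ)-RASL code over 𝔽_q in which each column is a repair set with (r, δ)-locality, and let D be an integer with K < D ≤ N − 1. Fix i ∈ [N], a set E_i ⊆ [L] with |E_i| ≥ δ, and a D-subset R ⊆ [N]∖{i}. Then for every repair scheme over 𝔽_q that recovers the erased entries (c_i)|_{E_i} from helper messages together with the surviving entries of column i — i.e., natural numbers (b_t)_{t∈R}, functions φ_t : 𝔽_q^L → 𝔽_q^{b_t} for t ∈ R, and a function Φ with (c_i)|_{E_i} = Φ((φ_t(c_t))_{t∈R}, (c_i)|_{[L]∖E_i}) for every codeword c ∈ C — the total download satisfies Σ_{t∈R} b_t ≥ D·(|E_i| − δ + 1)/(D − K + 1). -/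
/-- Corollary 4 of the paper: cut-set bound for partial repair. For an
`(N, K, k = Kr; L = r + δ - 1, δ)`-RASL code in which each column is a repair set with
`(r, δ)`-locality, `K < D ≤ N - 1`, and an erasure pattern `E_i ⊆ [L]` with `|E_i| ≥ δ`
in column `i`, any repair scheme recovering `(c_i)|_{E_i}` from `D` helper columns
together with the surviving entries of column `i` has total download at least
`D·(|E_i| - δ + 1)/(D - K + 1)`. -/
theorem rasl_partial_repair_cut_set_bound
    (F : Type*) [Field F] [Fintype F]
    (N K r δ L D : ℕ)
    (hr0 : 0 < r) (hrL : r < L) (hL : L + 1 = r + δ)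
    (hK : 1 ≤ K) (hKD : K < D) (hDN : D < N)
    (C : Set (Fin N → Fin L → F))
    (hcard : Nat.card C = Fintype.card F ^ (K * r))
    (hMDS : ∀ c₁ ∈ C, ∀ c₂ ∈ C, ∀ S : Finset (Fin N), S.card = K →
      (∀ j ∈ S, c₁ j = c₂ j) → c₁ = c₂)
    (hloc : ∀ c₁ ∈ C, ∀ c₂ ∈ C, ∀ j : Fin N, ∀ T : Finset (Fin L), T.card = r →
      (∀ p ∈ T, c₁ j p = c₂ j p) → c₁ j = c₂ j)
    (i : Fin N) (Ei : Finset (Fin L)) (hEi : δ ≤ Ei.card)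
    (R : Finset (Fin N)) (hR : R.card = D) (hiR : i ∉ R) :
    ∀ b : Fin N → ℕ,
    ∀ φ : (t : Fin N) → (Fin L → F) → (Fin (b t) → F),
    ∀ Φ : ((t : ↥R) → (Fin (b (t : Fin N)) → F)) →
          ({p : Fin L // p ∉ Ei} → F) → (↥Ei → F),
      (∀ c ∈ C, (fun p : ↥Ei => c i p.1) =
        Φ (fun t => φ t (c (t : Fin N))) (fun p => c i p.1)) →
      (D : ℚ) * ((Ei.card - δ + 1 : ℕ) : ℚ) / ((D : ℚ) - (K : ℚ) + 1) ≤
        ∑ t ∈ R, (b t : ℚ) := by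

  intro b φ Φ hΦ
  set q := Fintype.card F with hqdef
  have hq : 1 < q := Fintype.one_lt_card
  -- a fixed set of r positions
  obtain ⟨T, -, hTcard⟩ := Finset.exists_subset_card_eq
    (s := (Finset.univ : Finset (Fin L))) (n := r) (by simpa using hrL.le)
  have hEiL : Ei.card ≤ L := by simpa using Finset.card_le_univ Ei
  set m := D - K + 1 with hmdef
  have hmD : m ≤ D := by omega
  have hm2 : 2 ≤ m := by omega
  set a := Ei.card + 1 - δ with hadef
  -- Step 1 : every (D-K+1)-subset of helpers downloads at least `a` symbols
  have hS : ∀ S ⊆ R, S.card = m → a ≤ ∑ t ∈ S, b t := by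
    intro S hSR hScard
    have hRScard : (R \ S).card = K - 1 := by
      rw [Finset.card_sdiff_of_subset hSR, hR, hScard]; omega
    -- the injection
    let f : ↥C → (({t // t ∈ R \ S} → ({p // p ∈ T} → F)) ×
        ({p : Fin L // p ∉ Ei} → F) × ((t : ↥S) → Fin (b (t : Fin N)) → F)) :=
      fun c =>
      (fun t p => c.1 t.1 p.1, fun p => c.1 i p.1, fun t => φ t.1 (c.1 t.1))
    have hf : Function.Injective f := by
      intro c c' h
      have h1 := congrArg Prod.fst h
      have h2 := congrArg (fun x => x.2.1) h
      have h3 := congrArg (fun x => x.2.2) h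
      simp only [f] at h1 h2 h3
      have hcols : ∀ t ∈ R \ S, c.1 t = c'.1 t := by
        intro t ht
        refine hloc _ c.2 _ c'.2 t T hTcard (fun p hp => ?_)
        exact congrFun (congrFun h1 ⟨t, ht⟩) ⟨p, hp⟩
      have hmsg : (fun t : ↥R => φ t.1 (c.1 t.1)) = (fun t : ↥R => φ t.1 (c'.1 t.1)) := by
        funext t
        by_cases ht : t.1 ∈ S
        · exact congrFun h3 ⟨t.1, ht⟩
        · rw [hcols t.1 (Finset.mem_sdiff.2 ⟨t.2, ht⟩)]
      have hEq : (fun p : ↥Ei => c.1 i p.1) = (fun p : ↥Ei => c'.1 i p.1) := by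
        rw [hΦ _ c.2, hΦ _ c'.2, hmsg, h2]
      have hcoli : c.1 i = c'.1 i := by
        funext p
        by_cases hp : p ∈ Ei
        · exact congrFun hEq ⟨p, hp⟩
        · exact congrFun h2 ⟨p, hp⟩
      have hins : i ∉ R \ S := fun h => hiR (Finset.mem_sdiff.1 h).1
      have : c.1 = c'.1 := by
        refine hMDS _ c.2 _ c'.2 (insert i (R \ S)) ?_ ?_
        · rw [Finset.card_insert_of_notMem hins, hRScard]; omega
        · intro j hj
          rcases Finset.mem_insert.1 hj with rfl | hj
          · exact hcoli
          · exact hcols j hj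
      exact Subtype.ext this
    have hle := Nat.card_le_card_of_injective f hf
    have e1 : Fintype.card {p // p ∈ T} = r := by
      rw [Fintype.card_coe, hTcard]
    have e2 : Fintype.card {t // t ∈ R \ S} = K - 1 := by
      rw [Fintype.card_coe, hRScard]
    have e3 : Fintype.card {p : Fin L // p ∉ Ei} = L - Ei.card := by
      rw [Fintype.card_subtype_compl]
      simp [Fintype.card_coe]
    have c1 : Fintype.card ({t // t ∈ R \ S} → ({p // p ∈ T} → F))
        = q ^ (r * (K - 1)) := by
      rw [Fintype.card_fun, Fintype.card_fun, e1, e2, ← hqdef, ← pow_mul]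
    have c2 : Fintype.card ({p : Fin L // p ∉ Ei} → F) = q ^ (L - Ei.card) := by
      rw [Fintype.card_fun, e3, ← hqdef]
    have c3 : Fintype.card ((t : ↥S) → Fin (b (t : Fin N)) → F)
        = q ^ (∑ t ∈ S, b t) := by
      rw [Fintype.card_pi]
      calc ∏ t : ↥S, Fintype.card (Fin (b t.1) → F)
          = ∏ t : ↥S, q ^ (b t.1) := by
            refine Finset.prod_congr rfl (fun t _ => ?_)
            rw [Fintype.card_fun, Fintype.card_fin, ← hqdef]
        _ = q ^ ∑ t : ↥S, b t.1 := Finset.prod_pow_eq_pow_sum _ _ _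
        _ = q ^ ∑ t ∈ S, b t := by rw [Finset.sum_coe_sort]
    have hTarCard : Nat.card (({t // t ∈ R \ S} → ({p // p ∈ T} → F)) ×
        ({p : Fin L // p ∉ Ei} → F) × ((t : ↥S) → Fin (b (t : Fin N)) → F)) =
        q ^ (r * (K - 1) + ((L - Ei.card) + ∑ t ∈ S, b t)) := by
      rw [Nat.card_eq_fintype_card, Fintype.card_prod, Fintype.card_prod,
        c1, c2, c3, ← pow_add, ← pow_add]
    rw [hcard, hTarCard] at hle
    have hexp := (Nat.pow_le_pow_iff_right hq).1 hle
    obtain ⟨k, rfl⟩ : ∃ k, K = k + 1 := ⟨K - 1, by omega⟩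
    rw [show (k + 1) * r = r * k + r by ring, Nat.add_sub_cancel] at hexp
    have := le_of_add_le_add_left hexp
    omega
  -- Step 2 : each helper t lies in `(D-1).choose (m-1)` of the m-subsets of R
  have hcount : ∀ t ∈ R,
      ((R.powersetCard m).filter (fun S => t ∈ S)).card = (D - 1).choose (m - 1) := by
    intro t ht
    have hcardet : (R.erase t).card = D - 1 := by
      rw [Finset.card_erase_of_mem ht, hR]
    rw [← hcardet, ← Finset.card_powersetCard]
    apply Finset.card_bij' (fun S _ => S.erase t) (fun A _ => insert t A)
    · intro S hS
      simp only [Finset.mem_filter] at hS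
      exact Finset.insert_erase hS.2
    · intro A hA
      rw [Finset.mem_powersetCard] at hA
      have htA : t ∉ A := fun h => (Finset.mem_erase.1 (hA.1 h)).1 rfl
      exact Finset.erase_insert htA
    · intro S hS
      simp only [Finset.mem_filter, Finset.mem_powersetCard] at hS
      obtain ⟨⟨hsub, hcardS⟩, htS⟩ := hS
      rw [Finset.mem_powersetCard]
      constructor
      · exact fun x hx => Finset.mem_erase.2 ⟨(Finset.mem_erase.1 hx).1,
          hsub (Finset.mem_erase.1 hx).2⟩
      · rw [Finset.card_erase_of_mem htS, hcardS]
    · intro A hA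
      rw [Finset.mem_powersetCard] at hA
      obtain ⟨hsub, hcardA⟩ := hA
      have htA : t ∉ A := fun h => (Finset.mem_erase.1 (hsub h)).1 rfl
      simp only [Finset.mem_filter, Finset.mem_powersetCard]
      refine ⟨⟨?_, ?_⟩, Finset.mem_insert_self t A⟩
      · intro x hx
        rcases Finset.mem_insert.1 hx with rfl | hx
        · exact ht
        · exact (Finset.mem_erase.1 (hsub hx)).2
      · rw [Finset.card_insert_of_notMem htA, hcardA]; omega
  -- the double-counting identity
  have hsum : ∑ S ∈ R.powersetCard m, ∑ t ∈ S, b t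
      = (D - 1).choose (m - 1) * ∑ t ∈ R, b t := by
    calc ∑ S ∈ R.powersetCard m, ∑ t ∈ S, b t
        = ∑ S ∈ R.powersetCard m, ∑ t ∈ R, if t ∈ S then b t else 0 := by
          refine Finset.sum_congr rfl (fun S hSmem => ?_)
          have hSR : S ⊆ R := (Finset.mem_powersetCard.1 hSmem).1
          rw [Finset.sum_ite_mem, Finset.inter_comm, Finset.inter_eq_left.2 hSR]
      _ = ∑ t ∈ R, ∑ S ∈ R.powersetCard m, if t ∈ S then b t else 0 :=
          Finset.sum_comm
      _ = ∑ t ∈ R, (D - 1).choose (m - 1) * b t := by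
          refine Finset.sum_congr rfl (fun t ht => ?_)
          rw [← Finset.sum_filter, Finset.sum_const, smul_eq_mul, hcount t ht]
      _ = (D - 1).choose (m - 1) * ∑ t ∈ R, b t := (Finset.mul_sum _ _ _).symm
  -- lower bound from Step 1
  have hlower : D.choose m * a ≤ ∑ S ∈ R.powersetCard m, ∑ t ∈ S, b t := by
    calc D.choose m * a = ∑ _S ∈ R.powersetCard m, a := by
          rw [Finset.sum_const, smul_eq_mul, Finset.card_powersetCard, hR]
      _ ≤ ∑ S ∈ R.powersetCard m, ∑ t ∈ S, b t :=
          Finset.sum_le_sum (fun S hSm => hS S (Finset.mem_powersetCard.1 hSm).1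
            (Finset.mem_powersetCard.1 hSm).2)
  have hkey : D.choose m * a ≤ (D - 1).choose (m - 1) * ∑ t ∈ R, b t :=
    hsum ▸ hlower
  -- binomial identity  D * C(D-1, m-1) = C(D, m) * m
  have hid : D * (D - 1).choose (m - 1) = D.choose m * m := by
    have h := Nat.add_one_mul_choose_eq (D - 1) (m - 1)
    try simp only [Nat.succ_eq_add_one] at h
    rw [show D - 1 + 1 = D by omega, show m - 1 + 1 = m by omega] at h
    exact h
  have hchoosepos : 0 < D.choose m := Nat.choose_pos hmD
  set B := ∑ t ∈ R, b t with hBdef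
  -- D * a ≤ m * B
  have hnat : D * a ≤ m * B := by
    have h1 : D * (D.choose m * a) ≤ D * ((D - 1).choose (m - 1) * B) :=
      Nat.mul_le_mul_left D hkey
    rw [show D * ((D - 1).choose (m - 1) * B) = D * (D - 1).choose (m - 1) * B by
      ring, hid] at h1
    rw [show D * (D.choose m * a) = D.choose m * (D * a) by ring,
      show D.choose m * m * B = D.choose m * (m * B) by ring] at h1
    exact Nat.le_of_mul_le_mul_left h1 hchoosepos
  -- conclude over ℚ
  have hmQ : ((D : ℚ) - (K : ℚ) + 1) = (m : ℚ) := by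
    rw [hmdef]
    push_cast [Nat.cast_sub hKD.le]
    ring
  rw [show Ei.card - δ + 1 = a from by omega, hmQ,
    div_le_iff₀ (by exact_mod_cast Nat.lt_of_lt_of_le Nat.zero_lt_two hm2 : (0:ℚ) < (m:ℚ))]
  rw [← Nat.cast_sum]
  exact_mod_cast hnat.trans_eq (mul_comm m B)
end
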